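/- arXiv:2401.15567 — 2 statements merged into one kernel-verified Lean document; each statement's English description precedes it below -/
import Mathlib

section
/- Let X₁, …, Xₙ be random d×d real symmetric matrices with square-integrable entries, common mean E[Xᵢ] = M, and variance bounds Var(Xᵢ) = E[(Xᵢ − M)²] ⪯ V for all i, such that E[ (Xᵢ − M)(Xⱼ − M) + (Xⱼ − M)(Xᵢ − M) ] = 0 for all i ≠ j. Let U be a trace super-uniform random d×d positive semidefinite matrix independent of (X₁,…,Xₙ), and let A be a d×d symmetric positive definite matrix. Then for the sample mean X̄ₙ = (X₁ + ⋯ + Xₙ)/n, P( abs(X̄ₙ − M) ⋠ (A U A)^{1/2} ) ≤ n⁻¹ tr( V · A⁻² ). -/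
open MeasureTheory ProbabilityTheory Matrix Filter

noncomputable section

/-- Measurable space structure on matrices (entrywise). -/
instance matMS (d : ℕ) : MeasurableSpace (Matrix (Fin d) (Fin d) ℝ) :=
  inferInstanceAs (MeasurableSpace (Fin d → Fin d → ℝ))

/-- Loewner order: `A ⪯ B` iff `B - A` is positive semidefinite. -/
def LoewnerLE {d : ℕ} (A B : Matrix (Fin d) (Fin d) ℝ) : Prop := (B - A).PosSemidef

/-- Entrywise expectation of a random matrix. -/
def matExpect {Ω : Type*} {_ : MeasurableSpace Ω} {d : ℕ} (μ : Measure Ω)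
    (X : Ω → Matrix (Fin d) (Fin d) ℝ) : Matrix (Fin d) (Fin d) ℝ :=
  Matrix.of fun i j => ∫ ω, X ω i j ∂μ

/-- Entrywise conditional expectation of a random matrix. -/
def matCondExp {Ω : Type*} {m0 : MeasurableSpace Ω} {d : ℕ} (μ : Measure Ω)
    (m : MeasurableSpace Ω) (X : Ω → Matrix (Fin d) (Fin d) ℝ) : Ω → Matrix (Fin d) (Fin d) ℝ :=
  fun ω => Matrix.of fun i j => (μ[fun ω' => X ω' i j | m]) ω

/-- Spectral functional calculus for real symmetric matrices: apply `f` to the eigenvalues. -/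
def matCFC {d : ℕ} (f : ℝ → ℝ) (X : Matrix (Fin d) (Fin d) ℝ) : Matrix (Fin d) (Fin d) ℝ :=
  if hX : X.IsHermitian then
    (hX.eigenvectorUnitary : Matrix (Fin d) (Fin d) ℝ) *
      Matrix.diagonal (fun i => f (hX.eigenvalues i)) *
      star (hX.eigenvectorUnitary : Matrix (Fin d) (Fin d) ℝ)
  else 0

/-- Positive semidefinite square root (via the spectral calculus). -/
def matSqrt {d : ℕ} (X : Matrix (Fin d) (Fin d) ℝ) : Matrix (Fin d) (Fin d) ℝ :=
  matCFC Real.sqrt X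

/-- Matrix absolute value of a symmetric matrix. -/
def matAbs {d : ℕ} (X : Matrix (Fin d) (Fin d) ℝ) : Matrix (Fin d) (Fin d) ℝ :=
  matCFC (fun x => |x|) X

/-- Real power of a symmetric (positive (semi)definite) matrix. -/
def matRPow {d : ℕ} (p : ℝ) (X : Matrix (Fin d) (Fin d) ℝ) : Matrix (Fin d) (Fin d) ℝ :=
  matCFC (fun x => x ^ p) X

/-- Matrix logarithm of a positive definite matrix. -/
def matLog {d : ℕ} (X : Matrix (Fin d) (Fin d) ℝ) : Matrix (Fin d) (Fin d) ℝ :=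
  matCFC Real.log X

/-- Matrix exponential. -/
def matExpMat {d : ℕ} (X : Matrix (Fin d) (Fin d) ℝ) : Matrix (Fin d) (Fin d) ℝ :=
  NormedSpace.exp X

/-- Largest eigenvalue of a symmetric matrix. -/
def lamMax {d : ℕ} (X : Matrix (Fin d) (Fin d) ℝ) : ℝ :=
  if hX : X.IsHermitian then ⨆ i, hX.eigenvalues i else 0

/-- Operator (spectral) norm: the largest absolute value of an eigenvalue. -/
def specNorm {d : ℕ} (X : Matrix (Fin d) (Fin d) ℝ) : ℝ :=
  if hX : X.IsHermitian then ⨆ i, |hX.eigenvalues i| else 0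

/-- A random positive semidefinite matrix `U` is trace super-uniform if
`P(U ⋡ Y) ≤ tr Y` for every positive semidefinite `Y`. -/
def TraceSuperUniform {Ω : Type*} {_ : MeasurableSpace Ω} {d : ℕ} (μ : Measure Ω)
    (U : Ω → Matrix (Fin d) (Fin d) ℝ) : Prop :=
  ∀ Y : Matrix (Fin d) (Fin d) ℝ, Y.PosSemidef →
    μ {ω | ¬ LoewnerLE Y (U ω)} ≤ ENNReal.ofReal Y.trace

/-- Matrix supermartingale: adapted, symmetric, entrywise integrable, and
`E(Y (n+1) | ℱ n) ⪯ Y n` a.s. for every `n`. -/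
def IsMatrixSupermartingale {Ω : Type*} {m0 : MeasurableSpace Ω} {d : ℕ}
    (ℱ : Filtration ℕ m0) (μ : Measure Ω) (Y : ℕ → Ω → Matrix (Fin d) (Fin d) ℝ) : Prop :=
  (∀ n ω, (Y n ω).IsHermitian) ∧
  (∀ n i j, StronglyMeasurable[ℱ n] fun ω => Y n ω i j) ∧
  (∀ n i j, Integrable (fun ω => Y n ω i j) μ) ∧
  (∀ n, ∀ᵐ ω ∂μ, LoewnerLE (matCondExp μ (ℱ n) (Y (n + 1)) ω) (Y n ω))

/-- Matrix submartingale: adapted, symmetric, entrywise integrable, and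
`E(Y (n+1) | ℱ n) ⪰ Y n` a.s. for every `n`. -/
def IsMatrixSubmartingale {Ω : Type*} {m0 : MeasurableSpace Ω} {d : ℕ}
    (ℱ : Filtration ℕ m0) (μ : Measure Ω) (Y : ℕ → Ω → Matrix (Fin d) (Fin d) ℝ) : Prop :=
  (∀ n ω, (Y n ω).IsHermitian) ∧
  (∀ n i j, StronglyMeasurable[ℱ n] fun ω => Y n ω i j) ∧
  (∀ n i j, Integrable (fun ω => Y n ω i j) μ) ∧
  (∀ n, ∀ᵐ ω ∂μ, LoewnerLE (Y n ω) (matCondExp μ (ℱ n) (Y (n + 1)) ω))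

/-- Exchangeability of a sequence of random matrices: any finitely supported permutation
of the indices leaves the joint law invariant. -/
def MatExchangeable {Ω : Type*} {_ : MeasurableSpace Ω} {d : ℕ} (μ : Measure Ω)
    (X : ℕ → Ω → Matrix (Fin d) (Fin d) ℝ) : Prop :=
  ∀ σ : Equiv.Perm ℕ, {n | σ n ≠ n}.Finite →
    Measure.map (fun ω n => X (σ n) ω) μ = Measure.map (fun ω n => X n ω) μ

section Aux

variable {d : ℕ}

lemma isHermitian_of_symm {X : Matrix (Fin d) (Fin d) ℝ} (h : ∀ k l, X k l = X l k) :
    X.IsHermitian := by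
  ext k l
  simp only [conjTranspose_apply, star_trivial]
  exact h l k

lemma trace_mul_eq (W B : Matrix (Fin d) (Fin d) ℝ) :
    (W * B).trace = ∑ k, ∑ l, W k l * B l k := by
  simp [Matrix.trace, Matrix.diag, Matrix.mul_apply]

lemma trace_nonneg_of_psd {P : Matrix (Fin d) (Fin d) ℝ} (hP : P.PosSemidef) : 0 ≤ P.trace := by
  refine Finset.sum_nonneg fun k _ => ?_
  have := hP.dotProduct_mulVec_nonneg (Pi.single k 1)
  simpa [dotProduct, mulVec, Pi.single_apply, Finset.sum_ite_eq, Matrix.diag] using this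

lemma trace_mul_nonneg {P Q : Matrix (Fin d) (Fin d) ℝ} (hP : P.PosSemidef)
    (hQ : Q.PosSemidef) : 0 ≤ (P * Q).trace := by
  open scoped MatrixOrder in obtain ⟨C, rfl⟩ := CStarAlgebra.nonneg_iff_eq_star_mul_self.mp hP.nonneg
  rw [Matrix.mul_assoc, trace_mul_comm]
  exact trace_nonneg_of_psd (hQ.mul_mul_conjTranspose_same C)

lemma psd_smul {P : Matrix (Fin d) (Fin d) ℝ} (hP : P.PosSemidef) {c : ℝ} (hc : 0 ≤ c) :
    (c • P).PosSemidef := by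
  refine .of_dotProduct_mulVec_nonneg ?_ fun v => ?_
  · refine isHermitian_of_symm fun k l => ?_
    simp only [Matrix.smul_apply, smul_eq_mul]
    have := hP.1.apply k l
    rw [star_trivial] at this
    rw [this]
  · rw [smul_mulVec, dotProduct_smul, smul_eq_mul]
    exact mul_nonneg hc (hP.dotProduct_mulVec_nonneg v)

lemma loewner_sub_trace {E V B : Matrix (Fin d) (Fin d) ℝ} (h : (V - E).PosSemidef)
    (hB : B.PosSemidef) : (E * B).trace ≤ (V * B).trace := by
  have := trace_mul_nonneg h hB
  rw [Matrix.sub_mul, trace_sub] at this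
  linarith

lemma integrable_mul_of_L2 {Ω : Type*} {m0 : MeasurableSpace Ω} {μ : Measure Ω} {f g : Ω → ℝ}
    (hf : MemLp f 2 μ) (hg : MemLp g 2 μ) : Integrable (fun ω => f ω * g ω) μ := by
  refine Integrable.mono' ((hf.integrable_sq.add hg.integrable_sq).const_mul (2⁻¹ : ℝ))
    (hf.aestronglyMeasurable.mul hg.aestronglyMeasurable) (Eventually.of_forall fun ω => ?_)
  simp only [Pi.add_apply, Real.norm_eq_abs, abs_mul]
  nlinarith [abs_nonneg (f ω), abs_nonneg (g ω), sq_abs (f ω), sq_abs (g ω),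
    sq_nonneg (|f ω| - |g ω|)]

lemma double_sum_diag {n : ℕ} (m : Fin n → Fin n → ℝ)
    (h : ∀ i j, i ≠ j → m i j + m j i = 0) : ∑ i, ∑ j, m i j = ∑ i, m i i := by
  have key : (∑ i, ∑ j, m i j) + (∑ i, ∑ j, m i j) = (∑ i, m i i) + (∑ i, m i i) := by
    conv_lhs => rw [show (∑ i, ∑ j, m i j) + (∑ i, ∑ j, m i j)
      = (∑ i, ∑ j, m i j) + (∑ i, ∑ j, m j i) from by rw [Finset.sum_comm]]
    rw [← Finset.sum_add_distrib]
    simp_rw [← Finset.sum_add_distrib]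
    have : ∀ i : Fin n, ∑ j, (m i j + m j i) = m i i + m i i := by
      intro i
      rw [Finset.sum_eq_single i]
      · intro j _ hj
        exact h i j (Ne.symm hj)
      · intro hi; exact absurd (Finset.mem_univ i) hi
    rw [Finset.sum_congr rfl fun i _ => this i, Finset.sum_add_distrib]
  linarith

lemma measurable_entry (k l : Fin d) : Measurable (fun Y : Matrix (Fin d) (Fin d) ℝ => Y k l) :=
  (measurable_pi_apply (X := fun _ : Fin d => ℝ) l).comp
    (measurable_pi_apply (X := fun _ : Fin d => Fin d → ℝ) k)

lemma measurableSet_posSemidef :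
    MeasurableSet {Y : Matrix (Fin d) (Fin d) ℝ | Y.PosSemidef} := by
  have hform : ∀ (q : Fin d → ℝ), Measurable
      (fun Y : Matrix (Fin d) (Fin d) ℝ => ∑ k, q k * ∑ l, Y k l * q l) := fun q =>
    Finset.measurable_sum _ fun k _ =>
      (Finset.measurable_sum _ fun l _ => (measurable_entry k l).mul_const _).const_mul _
  have hset : {Y : Matrix (Fin d) (Fin d) ℝ | Y.PosSemidef} =
      {Y : Matrix (Fin d) (Fin d) ℝ | ∀ k l, Y k l = Y l k} ∩
      ⋂ q : Fin d → ℚ, {Y | 0 ≤ ∑ k, (q k : ℝ) * ∑ l, Y k l * (q l : ℝ)} := by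
    ext Y
    simp only [Set.mem_setOf_eq, Set.mem_inter_iff, Set.mem_iInter]
    constructor
    · intro hY
      refine ⟨fun k l => by rw [← hY.1.apply l k, star_trivial], fun q => ?_⟩
      have := hY.dotProduct_mulVec_nonneg (fun i => (q i : ℝ))
      simpa [dotProduct, mulVec, star_trivial, Finset.mul_sum] using this
    · rintro ⟨hsym, hq⟩
      refine .of_dotProduct_mulVec_nonneg (isHermitian_of_symm hsym) fun v => ?_
      have hcont : Continuous (fun v : Fin d → ℝ => ∑ k, v k * ∑ l, Y k l * v l) := by
        refine continuous_finset_sum _ fun k _ => (continuous_apply k).mul ?_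
        exact continuous_finset_sum _ fun l _ => (continuous_const.mul (continuous_apply l))
      have hclosed : IsClosed {v : Fin d → ℝ | 0 ≤ ∑ k, v k * ∑ l, Y k l * v l} :=
        isClosed_le continuous_const hcont
      have hdense : Dense (Set.pi Set.univ
          (fun _ : Fin d => Set.range ((↑) : ℚ → ℝ))) :=
        dense_pi Set.univ fun i _ => Rat.denseRange_cast
      have hsub : Set.pi Set.univ (fun _ : Fin d => Set.range ((↑) : ℚ → ℝ)) ⊆
          {v : Fin d → ℝ | 0 ≤ ∑ k, v k * ∑ l, Y k l * v l} := by
        intro u hu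
        choose q hqe using fun i => hu i (Set.mem_univ i)
        have : u = fun i => (q i : ℝ) := funext fun i => (hqe i).symm
        rw [Set.mem_setOf_eq, this]
        exact hq q
      have hv : v ∈ {v : Fin d → ℝ | 0 ≤ ∑ k, v k * ∑ l, Y k l * v l} := by
        have := hdense.closure_eq
        have hvm : v ∈ closure (Set.pi Set.univ
            (fun _ : Fin d => Set.range ((↑) : ℚ → ℝ))) := by rw [this]; trivial
        exact (hclosed.closure_subset_iff.mpr hsub) hvm
      simpa [dotProduct, mulVec, star_trivial, Finset.mul_sum] using hv
  rw [hset]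
  refine MeasurableSet.inter ?_ (MeasurableSet.iInter fun q => ?_)
  · rw [show {Y : Matrix (Fin d) (Fin d) ℝ | ∀ k l, Y k l = Y l k} =
      ⋂ k, ⋂ l, {Y : Matrix (Fin d) (Fin d) ℝ | Y k l = Y l k} by ext; simp]
    exact MeasurableSet.iInter fun k => MeasurableSet.iInter fun l =>
      measurableSet_eq_fun (measurable_entry k l) (measurable_entry l k)
  · exact measurableSet_le measurable_const (hform _)

lemma exists_rat_upper {P : Matrix (Fin d) (Fin d) ℝ} (hP : P.PosSemidef) {ε : ℝ}
    (hε : 0 < ε) : ∃ q : Fin d → Fin d → ℚ,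
    ((Matrix.of fun k l => ((q k l : ℚ) : ℝ)) - P).PosSemidef ∧
    (Matrix.of fun k l => ((q k l : ℚ) : ℝ)).trace ≤ P.trace + ε := by
  set c : ℝ := ε / (2 * (d + 1)) with hc
  have hcpos : 0 < c := by positivity
  set δ : ℝ := c / (d + 1) with hδ
  have hδpos : 0 < δ := by positivity
  have hδd : δ * d ≤ c := by
    rw [hδ, div_mul_eq_mul_div, div_le_iff₀ (by positivity)]
    nlinarith
  set P' : Matrix (Fin d) (Fin d) ℝ := P + c • (1 : Matrix (Fin d) (Fin d) ℝ) with hP'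
  have hP'sym : ∀ k l, P' k l = P' l k := by
    intro k l
    have hsym : P k l = P l k := by rw [← hP.1.apply l k, star_trivial]
    simp [hP', Matrix.add_apply, Matrix.smul_apply, Matrix.one_apply, hsym, eq_comm]
  have happ : ∀ k l, ∃ q : ℚ, |P' k l - (q : ℝ)| < δ := fun k l =>
    exists_rat_near (P' k l) hδpos
  choose q0 hq0 using happ
  refine ⟨fun k l => (q0 k l + q0 l k) / 2, ?_, ?_⟩
  · set Q : Matrix (Fin d) (Fin d) ℝ :=
      Matrix.of fun k l => (((q0 k l + q0 l k) / 2 : ℚ) : ℝ) with hQ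
    have hQsym : ∀ k l, Q k l = Q l k := by
      intro k l
      simp only [hQ, Matrix.of_apply]
      norm_cast
      rw [add_comm]
    have hQapprox : ∀ k l, |Q k l - P' k l| ≤ δ := by
      intro k l
      have h1 := hq0 k l
      have h2 := hq0 l k
      have : Q k l - P' k l = (((q0 k l : ℝ) - P' k l) + ((q0 l k : ℝ) - P' l k)) / 2 := by
        rw [hP'sym k l]
        simp only [hQ, Matrix.of_apply]
        push_cast
        ring
      rw [this]
      rw [abs_sub_comm] at h1 h2
      calc |(((q0 k l : ℝ) - P' k l) + ((q0 l k : ℝ) - P' l k)) / 2|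
          ≤ (|(q0 k l : ℝ) - P' k l| + |(q0 l k : ℝ) - P' l k|) / 2 := by
            rw [abs_div]
            simp only [abs_two]
            gcongr
            exact abs_add_le _ _
        _ ≤ (δ + δ) / 2 := by gcongr <;> exact le_of_lt (by assumption)
        _ = δ := by ring
    refine .of_dotProduct_mulVec_nonneg (isHermitian_of_symm fun k l => ?_) fun v => ?_
    · simp only [Matrix.sub_apply]
      have hsymP : P k l = P l k := by rw [← hP.1.apply l k, star_trivial]
      rw [hQsym k l, hsymP]
    · -- quadratic form bound
      rw [star_trivial]
      have hsplit : Q - P = (Q - P') + c • (1 : Matrix (Fin d) (Fin d) ℝ) := by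
        rw [hP']; abel
      rw [hsplit, Matrix.add_mulVec, dotProduct_add]
      have hterm2 : v ⬝ᵥ (c • (1 : Matrix (Fin d) (Fin d) ℝ)) *ᵥ v = c * ∑ k, v k ^ 2 := by
        rw [smul_mulVec, one_mulVec, dotProduct_smul, smul_eq_mul]
        congr 1
        simp [dotProduct, pow_two]
      have habs : |v ⬝ᵥ (Q - P') *ᵥ v| ≤ δ * (∑ k, |v k|) ^ 2 := by
        have : v ⬝ᵥ (Q - P') *ᵥ v = ∑ k, ∑ l, v k * ((Q - P') k l * v l) := by
          simp [dotProduct, mulVec, Finset.mul_sum]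
        rw [this]
        calc |∑ k, ∑ l, v k * ((Q - P') k l * v l)|
            ≤ ∑ k, |∑ l, v k * ((Q - P') k l * v l)| := Finset.abs_sum_le_sum_abs _ _
          _ ≤ ∑ k, ∑ l, |v k * ((Q - P') k l * v l)| :=
              Finset.sum_le_sum fun k _ => Finset.abs_sum_le_sum_abs _ _
          _ ≤ ∑ k, ∑ l, |v k| * (δ * |v l|) := by
              refine Finset.sum_le_sum fun k _ => Finset.sum_le_sum fun l _ => ?_
              rw [abs_mul, abs_mul]
              have h3 : |(Q - P') k l| ≤ δ := by
                rw [Matrix.sub_apply]; exact hQapprox k l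
              exact mul_le_mul_of_nonneg_left
                (mul_le_mul_of_nonneg_right h3 (abs_nonneg (v l))) (abs_nonneg (v k))
          _ = δ * (∑ k, |v k|) ^ 2 := by
              have he : δ * (∑ k, |v k|) ^ 2 = ∑ k, ∑ l, |v k| * (δ * |v l|) := by
                rw [pow_two, Finset.sum_mul_sum, Finset.mul_sum]
                refine Finset.sum_congr rfl fun k _ => ?_
                rw [Finset.mul_sum]
                refine Finset.sum_congr rfl fun l _ => ?_
                ring
              rw [he]
      have hCS : (∑ k, |v k|) ^ 2 ≤ d * ∑ k, v k ^ 2 := by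
        have := sq_sum_le_card_mul_sum_sq (s := (Finset.univ : Finset (Fin d)))
          (f := fun k => |v k|)
        simpa [sq_abs, Finset.card_univ] using this
      have h4 : -(c * ∑ k, v k ^ 2) ≤ v ⬝ᵥ (Q - P') *ᵥ v := by
        have h5 : |v ⬝ᵥ (Q - P') *ᵥ v| ≤ c * ∑ k, v k ^ 2 := by
          calc |v ⬝ᵥ (Q - P') *ᵥ v| ≤ δ * (∑ k, |v k|) ^ 2 := habs
            _ ≤ δ * (d * ∑ k, v k ^ 2) := by
                have := hδpos.le; gcongr
            _ = (δ * d) * ∑ k, v k ^ 2 := by ring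
            _ ≤ c * ∑ k, v k ^ 2 := by
                have hnn : 0 ≤ ∑ k, v k ^ 2 := Finset.sum_nonneg fun k _ => sq_nonneg _
                exact mul_le_mul_of_nonneg_right hδd hnn
        linarith [neg_abs_le (v ⬝ᵥ (Q - P') *ᵥ v)]
      rw [hterm2]
      linarith
  · -- trace bound
    have htr : ∀ k : Fin d, (Matrix.of fun k l => (((q0 k l + q0 l k) / 2 : ℚ) : ℝ)) k k
        ≤ P k k + c + δ := by
      intro k
      have h1 := hq0 k k
      have hPkk : P' k k = P k k + c := by
        simp [hP', Matrix.add_apply, Matrix.smul_apply, Matrix.one_apply]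
      have : (Matrix.of fun k l => (((q0 k l + q0 l k) / 2 : ℚ) : ℝ)) k k = (q0 k k : ℝ) := by
        simp only [Matrix.of_apply]
        push_cast; ring
      rw [this]
      have := abs_lt.mp h1
      linarith [this.1, this.2]
    calc (Matrix.of fun k l => (((q0 k l + q0 l k) / 2 : ℚ) : ℝ)).trace
        ≤ ∑ k, (P k k + c + δ) := Finset.sum_le_sum fun k _ => htr k
      _ = P.trace + d * c + d * δ := by
          rw [Matrix.trace]
          simp [Finset.sum_add_distrib, Matrix.diag]
      _ ≤ P.trace + ε := by
          have : (d : ℝ) * δ ≤ c := by rw [mul_comm]; exact hδd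
          have hcd : ((d : ℝ) + 1) * c = ε / 2 := by
            rw [hc]; field_simp
          nlinarith

lemma psd_of_sq_le_sq {d : ℕ} {S T : Matrix (Fin d) (Fin d) ℝ}
    (hS : S.PosSemidef) (hT : T.PosSemidef) (h2 : (T ^ 2 - S ^ 2).PosSemidef) :
    (T - S).PosSemidef := by
  have hH : (T - S).IsHermitian := hT.1.sub hS.1
  refine hH.posSemidef_iff_eigenvalues_nonneg.mpr fun i => show 0 ≤ hH.eigenvalues i from ?_
  by_contra hlt
  push_neg at hlt
  set lam := hH.eigenvalues i with hlam
  set v : Fin d → ℝ := ⇑(hH.eigenvectorBasis i) with hv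
  have hv0 : v ≠ 0 := (WithLp.ofLp_eq_zero (p := 2)).not.mpr (hH.eigenvectorBasis.orthonormal.ne_zero i)
  have heig : (T - S) *ᵥ v = lam • v := hH.mulVec_eigenvectorBasis i
  have hstar : star v = v := funext fun k => star_trivial _
  have hsym : (T - S)ᵀ = T - S := hH
  have hvm : v ᵥ* (T - S) = lam • v := by
    rw [← hsym, vecMul_transpose, heig]
  have key : (0:ℝ) ≤ lam * (v ⬝ᵥ T *ᵥ v + v ⬝ᵥ S *ᵥ v) := by
    have h0 : T ^ 2 - S ^ 2 = T * (T - S) + (T - S) * S := by noncomm_ring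
    have h1 := h2.dotProduct_mulVec_nonneg v
    have e1 : v ⬝ᵥ (T * (T - S)) *ᵥ v = lam * (v ⬝ᵥ T *ᵥ v) := by
      rw [← mulVec_mulVec, heig, mulVec_smul, dotProduct_smul, smul_eq_mul]
    have e2 : v ⬝ᵥ ((T - S) * S) *ᵥ v = lam * (v ⬝ᵥ S *ᵥ v) := by
      rw [← mulVec_mulVec, dotProduct_mulVec, hvm, smul_dotProduct, smul_eq_mul]
    rw [hstar, h0, add_mulVec, dotProduct_add, e1, e2] at h1
    rw [mul_add]; exact h1
  have hTq : (0:ℝ) ≤ v ⬝ᵥ T *ᵥ v := by simpa [hstar] using hT.dotProduct_mulVec_nonneg v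
  have hSq : (0:ℝ) ≤ v ⬝ᵥ S *ᵥ v := by simpa [hstar] using hS.dotProduct_mulVec_nonneg v
  have hsum : v ⬝ᵥ T *ᵥ v + v ⬝ᵥ S *ᵥ v = 0 := by nlinarith
  have hT0 : T *ᵥ v = 0 := by
    rw [← hT.dotProduct_mulVec_zero_iff v, hstar]; linarith
  have hS0 : S *ᵥ v = 0 := by
    rw [← hS.dotProduct_mulVec_zero_iff v, hstar]; linarith
  have : lam • v = 0 := by rw [← heig, sub_mulVec, hT0, hS0, sub_zero]
  rcases smul_eq_zero.mp this with h | h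
  · exact absurd h (ne_of_lt hlt)
  · exact hv0 h

variable {X : Matrix (Fin d) (Fin d) ℝ}

lemma matCFC_of_isHermitian (hX : X.IsHermitian) (f : ℝ → ℝ) :
    matCFC f X = (hX.eigenvectorUnitary : Matrix (Fin d) (Fin d) ℝ) *
      Matrix.diagonal (fun i => f (hX.eigenvalues i)) *
      star (hX.eigenvectorUnitary : Matrix (Fin d) (Fin d) ℝ) := dif_pos hX

lemma matCFC_congr (hX : X.IsHermitian) {f g : ℝ → ℝ}
    (h : ∀ i, f (hX.eigenvalues i) = g (hX.eigenvalues i)) : matCFC f X = matCFC g X := by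
  rw [matCFC_of_isHermitian hX f, matCFC_of_isHermitian hX g]
  congr 2
  exact congrArg _ (funext h)

lemma matCFC_mul (hX : X.IsHermitian) (f g : ℝ → ℝ) :
    matCFC f X * matCFC g X = matCFC (fun x => f x * g x) X := by
  rw [matCFC_of_isHermitian hX f, matCFC_of_isHermitian hX g,
    matCFC_of_isHermitian hX (fun x => f x * g x)]
  have hu : ∀ M : Matrix (Fin d) (Fin d) ℝ,
      (star (hX.eigenvectorUnitary : Matrix (Fin d) (Fin d) ℝ)) *
      ((hX.eigenvectorUnitary : Matrix (Fin d) (Fin d) ℝ) * M) = M := by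
    intro M
    rw [← mul_assoc, Unitary.coe_star_mul_self, one_mul]
  simp only [mul_assoc, hu]
  rw [← Matrix.diagonal_mul_diagonal]
  simp only [mul_assoc]

lemma matCFC_id (hX : X.IsHermitian) : matCFC (fun x => x) X = X := by
  rw [matCFC_of_isHermitian hX]
  exact (hX.spectral_theorem).symm

lemma matCFC_posSemidef (hX : X.IsHermitian) {f : ℝ → ℝ}
    (hf : ∀ i, 0 ≤ f (hX.eigenvalues i)) : (matCFC f X).PosSemidef := by
  rw [matCFC_of_isHermitian hX, Matrix.star_eq_conjTranspose]
  exact (Matrix.posSemidef_diagonal_iff.mpr hf).mul_mul_conjTranspose_same _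

lemma matAbs_posSemidef (hX : X.IsHermitian) : (matAbs X).PosSemidef :=
  matCFC_posSemidef hX fun i => abs_nonneg _

lemma matAbs_sq (hX : X.IsHermitian) : matAbs X ^ 2 = X ^ 2 := by
  rw [pow_two, pow_two, matAbs, matCFC_mul hX,
    matCFC_congr hX (g := fun x => x * x) (fun i => abs_mul_abs_self _), ← matCFC_mul hX,
    matCFC_id hX]

lemma matSqrt_posSemidef (hX : X.PosSemidef) : (matSqrt X).PosSemidef :=
  matCFC_posSemidef hX.1 fun i => Real.sqrt_nonneg _

lemma matSqrt_sq (hX : X.PosSemidef) : matSqrt X ^ 2 = X := by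
  rw [pow_two, matSqrt, matCFC_mul hX.1,
    matCFC_congr hX.1 (g := fun x => x) (fun i => Real.mul_self_sqrt (hX.eigenvalues_nonneg i)),
    matCFC_id hX.1]

end Aux

section Aux2

variable {d : ℕ}

lemma herm_apply {X : Matrix (Fin d) (Fin d) ℝ} (h : X.IsHermitian) (k l : Fin d) :
    X k l = X l k := by rw [← h.apply l k, star_trivial]

lemma loewner_trans {a b c : Matrix (Fin d) (Fin d) ℝ} (h1 : LoewnerLE a b)
    (h2 : LoewnerLE b c) : LoewnerLE a c := by
  have := Matrix.PosSemidef.add h2 h1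
  rwa [sub_add_sub_cancel] at this

lemma event_incl {S U A : Matrix (Fin d) (Fin d) ℝ} (hS : S.IsHermitian)
    (hU : U.PosSemidef) (hA : A.PosDef)
    (h : LoewnerLE (A⁻¹ * (S * S) * A⁻¹) U) : LoewnerLE (matAbs S) (matSqrt (A * U * A)) := by
  have hAH : A.IsHermitian := hA.1
  have hdet : IsUnit A.det := hA.det_pos.ne'.isUnit
  have hAUA : (A * U * A).PosSemidef := by
    have := hU.mul_mul_conjTranspose_same A
    rwa [hAH.eq] at this
  have hT := matSqrt_posSemidef hAUA
  have habs := matAbs_posSemidef hS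
  have key : (matSqrt (A * U * A) ^ 2 - matAbs S ^ 2).PosSemidef := by
    rw [matSqrt_sq hAUA, matAbs_sq hS]
    have h3 := h.mul_mul_conjTranspose_same A
    rw [hAH.eq] at h3
    have e : A * (U - A⁻¹ * (S * S) * A⁻¹) * A = A * U * A - S ^ 2 := by
      rw [Matrix.mul_sub, Matrix.sub_mul]
      congr 1
      rw [pow_two]
      calc A * (A⁻¹ * (S * S) * A⁻¹) * A
          = (A * A⁻¹) * (S * S) * (A⁻¹ * A) := by
            simp only [Matrix.mul_assoc]
        _ = S * S := by
            rw [Matrix.mul_nonsing_inv _ hdet, Matrix.nonsing_inv_mul _ hdet, one_mul,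
              Matrix.mul_one]
    rw [pow_two]
    rw [e] at h3
    rw [pow_two] at h3
    exact h3
  exact psd_of_sq_le_sq habs hT key

end Aux2

/-- **Uniformly randomized n-matrix Chebyshev inequality.**
Under common mean `M`, variance bounds `V`, vanishing expected anticommutators, a trace
super-uniform random PSD matrix `U` independent of the data, and `A ≻ 0`:
`P( abs(X̄ₙ - M) ⋠ (A U A)^{1/2} ) ≤ n⁻¹ tr(V A⁻²)`. -/
theorem stmt3 {Ω : Type*} {m0 : MeasurableSpace Ω} (μ : Measure Ω) [IsProbabilityMeasure μ]
    {d n : ℕ} (hn : 0 < n)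
    (X : Fin n → Ω → Matrix (Fin d) (Fin d) ℝ) (U : Ω → Matrix (Fin d) (Fin d) ℝ)
    (hsymm : ∀ i ω, (X i ω).IsHermitian)
    (hL2 : ∀ i k l, MemLp (fun ω => X i ω k l) 2 μ)
    (M V : Matrix (Fin d) (Fin d) ℝ)
    (hM : ∀ i, matExpect μ (X i) = M)
    (hV : ∀ i, LoewnerLE (matExpect μ (fun ω => (X i ω - M) * (X i ω - M))) V)
    (hcross : ∀ i j, i ≠ j →
      matExpect μ (fun ω => (X i ω - M) * (X j ω - M) + (X j ω - M) * (X i ω - M)) = 0)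
    (hUpsd : ∀ ω, (U ω).PosSemidef)
    (hU : TraceSuperUniform μ U)
    (hindep : IndepFun (fun ω (i : Fin n) => X i ω) U μ)
    (A : Matrix (Fin d) (Fin d) ℝ) (hA : A.PosDef) :
    μ {ω | ¬ LoewnerLE (matAbs ((n : ℝ)⁻¹ • ∑ i, X i ω - M)) (matSqrt (A * U ω * A))} ≤
      ENNReal.ofReal ((V * (A⁻¹ * A⁻¹)).trace / n) := by
  classical
  have hn' : (n : ℝ) ≠ 0 := Nat.cast_ne_zero.mpr hn.ne'
  set S : Ω → Matrix (Fin d) (Fin d) ℝ := fun ω => (n : ℝ)⁻¹ • ∑ i, X i ω - M with hSdef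
  set B : Matrix (Fin d) (Fin d) ℝ := A⁻¹ * A⁻¹ with hBdef
  set I : ℝ := ∫ ω, ((S ω * S ω) * B).trace ∂μ with hIdef
  -- basic symmetry facts
  have i0 : Fin n := ⟨0, hn⟩
  have hMe : ∀ k l, M k l = ∫ ω, X i0 ω k l ∂μ := fun k l => by rw [← hM i0]; rfl
  have hMsym : ∀ k l, M k l = M l k := by
    intro k l
    rw [hMe, hMe]
    exact integral_congr_ae (Eventually.of_forall fun ω => herm_apply (hsymm i0 ω) k l)
  have hSapp : ∀ ω k l, S ω k l = (n : ℝ)⁻¹ * (∑ i, X i ω k l) - M k l := by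
    intro ω k l
    simp [hSdef, Matrix.sub_apply, Matrix.smul_apply, Matrix.sum_apply, smul_eq_mul]
  have hSh : ∀ ω, (S ω).IsHermitian := by
    intro ω
    refine isHermitian_of_symm fun k l => ?_
    rw [hSapp, hSapp, hMsym k l]
    congr 2
    exact Finset.sum_congr rfl fun i _ => herm_apply (hsymm i ω) k l
  have hSSpsd : ∀ ω, (S ω * S ω).PosSemidef := by
    intro ω
    have := Matrix.posSemidef_conjTranspose_mul_self (S ω)
    rwa [(hSh ω).eq] at this
  have hAi : A⁻¹.PosDef := hA.inv
  have hBpsd : B.PosSemidef := by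
    have := Matrix.posSemidef_conjTranspose_mul_self A⁻¹
    rwa [hAi.1.eq] at this
  -- integrability facts
  have hSL2 : ∀ k l, MemLp (fun ω => S ω k l) 2 μ := by
    intro k l
    have he : (fun ω => S ω k l) = fun ω => (n : ℝ)⁻¹ * (∑ i, X i ω k l) - M k l :=
      funext fun ω => hSapp ω k l
    rw [he]
    have h1 : MemLp (fun ω => ∑ i, X i ω k l) 2 μ :=
      memLp_finset_sum Finset.univ fun i _ => hL2 i k l
    exact (h1.const_mul _).sub (memLp_const _)
  have hSSint : ∀ k l, Integrable (fun ω => (S ω * S ω) k l) μ := by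
    intro k l
    have he : (fun ω => (S ω * S ω) k l) = fun ω => ∑ m, S ω k m * S ω m l :=
      funext fun ω => by simp [Matrix.mul_apply]
    rw [he]
    exact integrable_finset_sum _ fun m _ => integrable_mul_of_L2 (hSL2 k m) (hSL2 m l)
  have hDL2 : ∀ i k l, MemLp (fun ω => (X i ω - M) k l) 2 μ := by
    intro i k l
    have he : (fun ω => (X i ω - M) k l) = fun ω => X i ω k l - M k l :=
      funext fun ω => by simp [Matrix.sub_apply]
    rw [he]
    exact (hL2 i k l).sub (memLp_const _)
  have hDDint : ∀ i j k l, Integrable (fun ω => ((X i ω - M) * (X j ω - M)) k l) μ := by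
    intro i j k l
    have he : (fun ω => ((X i ω - M) * (X j ω - M)) k l)
        = fun ω => ∑ m, (X i ω - M) k m * (X j ω - M) m l :=
      funext fun ω => by simp [Matrix.mul_apply]
    rw [he]
    exact integrable_finset_sum _ fun m _ => integrable_mul_of_L2 (hDL2 i k m) (hDL2 j m l)
  have htr_int : Integrable (fun ω => ((S ω * S ω) * B).trace) μ := by
    have he : (fun ω => ((S ω * S ω) * B).trace)
        = fun ω => ∑ k, ∑ l, (S ω * S ω) k l * B l k :=
      funext fun ω => trace_mul_eq _ _
    rw [he]
    exact integrable_finset_sum _ fun k _ => integrable_finset_sum _ fun l _ =>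
      (hSSint k l).mul_const _
  have htr_nn : ∀ ω, 0 ≤ ((S ω * S ω) * B).trace := fun ω =>
    trace_mul_nonneg (hSSpsd ω) hBpsd
  -- Part II : I ≤ tr(V B) / n
  have hVB : I ≤ (V * B).trace / n := by
    set c2 : ℝ := (n : ℝ)⁻¹ * (n : ℝ)⁻¹ with hc2def
    have hc2nn : 0 ≤ c2 := mul_nonneg (by positivity) (by positivity)
    -- S ω = n⁻¹ • ∑ (X i ω - M)
    have hSD : ∀ ω, S ω = (n : ℝ)⁻¹ • ∑ i, (X i ω - M) := by
      intro ω
      rw [hSdef]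
      rw [Finset.sum_sub_distrib, Finset.sum_const, Finset.card_univ, Fintype.card_fin,
        smul_sub, ← Nat.cast_smul_eq_nsmul ℝ n M, smul_smul, inv_mul_cancel₀ hn', one_smul]
    have hSS : ∀ ω, S ω * S ω = c2 • ∑ i, ∑ j, (X i ω - M) * (X j ω - M) := by
      intro ω
      rw [hSD ω, smul_mul_smul_comm, Finset.sum_mul_sum, hc2def]
    -- entry identity
    have hcross' : ∀ (i j : Fin n), i ≠ j → ∀ k l,
        (∫ ω, ((X i ω - M) * (X j ω - M)) k l ∂μ)
          + (∫ ω, ((X j ω - M) * (X i ω - M)) k l ∂μ) = 0 := by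
      intro i j hij k l
      have h0 := hcross i j hij
      have h1 : (matExpect μ (fun ω => (X i ω - M) * (X j ω - M)
          + (X j ω - M) * (X i ω - M))) k l = 0 := by rw [h0]; rfl
      have h2 : (matExpect μ (fun ω => (X i ω - M) * (X j ω - M)
          + (X j ω - M) * (X i ω - M))) k l
          = ∫ ω, (((X i ω - M) * (X j ω - M)) k l + ((X j ω - M) * (X i ω - M)) k l) ∂μ := by
        simp [matExpect, Matrix.add_apply]
      rw [h2, integral_add (hDDint i j k l) (hDDint j i k l)] at h1
      exact h1
    have hentry : ∀ k l, (∫ ω, (S ω * S ω) k l ∂μ)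
        = c2 * ∑ i, (matExpect μ (fun ω => (X i ω - M) * (X i ω - M))) k l := by
      intro k l
      have he : (fun ω => (S ω * S ω) k l)
          = fun ω => c2 * ∑ i, ∑ j, ((X i ω - M) * (X j ω - M)) k l := by
        funext ω
        rw [hSS ω]
        simp [Matrix.smul_apply, Matrix.sum_apply, smul_eq_mul]
      rw [he, integral_const_mul]
      congr 1
      have hintsum : (∫ ω, ∑ i, ∑ j, ((X i ω - M) * (X j ω - M)) k l ∂μ)
          = ∑ i, ∑ j, ∫ ω, ((X i ω - M) * (X j ω - M)) k l ∂μ := by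
        rw [integral_finset_sum _ fun i _ => integrable_finset_sum _ fun j _ => hDDint i j k l]
        exact Finset.sum_congr rfl fun i _ =>
          integral_finset_sum _ fun j _ => hDDint i j k l
      rw [hintsum]
      rw [double_sum_diag _ (fun i j hij => hcross' i j hij k l)]
      exact Finset.sum_congr rfl fun i _ => rfl
    -- I = c2 * ∑ i tr(E_i B)
    have hIeq : I = c2 * ∑ i,
        ((matExpect μ (fun ω => (X i ω - M) * (X i ω - M))) * B).trace := by
      have he : (fun ω => ((S ω * S ω) * B).trace)
          = fun ω => ∑ k, ∑ l, (S ω * S ω) k l * B l k := funext fun ω => trace_mul_eq _ _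
      rw [hIdef, he]
      rw [integral_finset_sum _ fun k _ => integrable_finset_sum _ fun l _ =>
        (hSSint k l).mul_const _]
      have hstep : ∀ k : Fin d, (∫ ω, ∑ l, (S ω * S ω) k l * B l k ∂μ)
          = ∑ l, (∫ ω, (S ω * S ω) k l ∂μ) * B l k := by
        intro k
        rw [integral_finset_sum _ fun l _ => (hSSint k l).mul_const _]
        exact Finset.sum_congr rfl fun l _ => integral_mul_const _ _
      rw [Finset.sum_congr rfl fun k _ => hstep k]
      have hstep2 : ∀ k l, (∫ ω, (S ω * S ω) k l ∂μ) * B l k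
          = c2 * ∑ i, ((matExpect μ (fun ω => (X i ω - M) * (X i ω - M))) k l * B l k) := by
        intro k l
        rw [hentry k l, mul_assoc, Finset.sum_mul]
      simp_rw [hstep2, ← Finset.mul_sum]
      congr 1
      have h1 : ∀ k : Fin d, (∑ l, ∑ i,
          (matExpect μ (fun ω => (X i ω - M) * (X i ω - M))) k l * B l k)
          = ∑ i, ∑ l, (matExpect μ (fun ω => (X i ω - M) * (X i ω - M))) k l * B l k :=
        fun k => by rw [Finset.sum_comm]
      rw [Finset.sum_congr rfl fun k _ => h1 k, Finset.sum_comm]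
      exact Finset.sum_congr rfl fun i _ => (trace_mul_eq _ _).symm
    rw [hIeq]
    have hone : ∀ i : Fin n, ((matExpect μ (fun ω => (X i ω - M) * (X i ω - M))) * B).trace
        ≤ (V * B).trace := fun i => loewner_sub_trace (hV i) hBpsd
    calc c2 * ∑ i, ((matExpect μ (fun ω => (X i ω - M) * (X i ω - M))) * B).trace
        ≤ c2 * ∑ _i : Fin n, (V * B).trace := by
          exact mul_le_mul_of_nonneg_left (Finset.sum_le_sum fun i _ => hone i) hc2nn
      _ = (V * B).trace / n := by
          rw [Finset.sum_const, Finset.card_univ, Fintype.card_fin, nsmul_eq_mul, hc2def]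
          field_simp
  -- Part I : for every ε > 0, μ Event ≤ ofReal (I + ε)
  have key : ∀ ε : ℝ, 0 < ε →
      μ {ω | ¬ LoewnerLE (matAbs ((n : ℝ)⁻¹ • ∑ i, X i ω - M)) (matSqrt (A * U ω * A))} ≤
        ENNReal.ofReal (I + ε) := by
    intro ε hε
    -- countable family of rational matrices
    obtain ⟨e, he⟩ := exists_surjective_nat (Fin d → Fin d → ℚ)
    set Qm : ℕ → Matrix (Fin d) (Fin d) ℝ :=
      fun j => Matrix.of fun k l => ((e j k l : ℚ) : ℝ) with hQmdef
    -- the test function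
    set φ : (Fin n → Matrix (Fin d) (Fin d) ℝ) → Matrix (Fin d) (Fin d) ℝ :=
      fun x => A⁻¹ * (((n : ℝ)⁻¹ • ∑ i, x i - M) * ((n : ℝ)⁻¹ • ∑ i, x i - M)) * A⁻¹
      with hφdef
    have hY : ∀ u v : Fin d, Measurable
        (fun x : Fin n → Matrix (Fin d) (Fin d) ℝ => ((n : ℝ)⁻¹ • ∑ i, x i - M) u v) := by
      intro u v
      have he2 : (fun x : Fin n → Matrix (Fin d) (Fin d) ℝ =>
          ((n : ℝ)⁻¹ • ∑ i, x i - M) u v)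
          = fun x => (n : ℝ)⁻¹ * (∑ i, x i u v) - M u v := by
        funext x
        simp [Matrix.sub_apply, Matrix.smul_apply, Matrix.sum_apply, smul_eq_mul]
      rw [he2]
      exact ((Finset.measurable_sum _ fun i _ =>
        (measurable_entry u v).comp (measurable_pi_apply i)).const_mul _).sub measurable_const
    have hW : ∀ u v : Fin d, Measurable (fun x : Fin n → Matrix (Fin d) (Fin d) ℝ =>
        (((n : ℝ)⁻¹ • ∑ i, x i - M) * ((n : ℝ)⁻¹ • ∑ i, x i - M)) u v) := by
      intro u v
      have he2 : (fun x : Fin n → Matrix (Fin d) (Fin d) ℝ =>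
          (((n : ℝ)⁻¹ • ∑ i, x i - M) * ((n : ℝ)⁻¹ • ∑ i, x i - M)) u v)
          = fun x => ∑ m, ((n : ℝ)⁻¹ • ∑ i, x i - M) u m * ((n : ℝ)⁻¹ • ∑ i, x i - M) m v := by
        funext x; simp [Matrix.mul_apply]
      rw [he2]
      exact Finset.measurable_sum _ fun m _ => (hY u m).mul (hY m v)
    have hφm : Measurable φ := by
      refine measurable_pi_lambda _ fun k => measurable_pi_lambda _ fun l => ?_
      have he2 : (fun x => φ x k l)
          = fun x : Fin n → Matrix (Fin d) (Fin d) ℝ =>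
            ∑ a, (∑ b, A⁻¹ k b *
              ((((n : ℝ)⁻¹ • ∑ i, x i - M) * ((n : ℝ)⁻¹ • ∑ i, x i - M)) b a)) * A⁻¹ a l := by
        funext x
        simp [hφdef, Matrix.mul_apply]
      rw [he2]
      exact Finset.measurable_sum _ fun a _ =>
        (Finset.measurable_sum _ fun b _ => (hW b a).const_mul _).mul_const _
    have hψ : Measurable fun x => (φ x).trace := by
      have he2 : (fun x => (φ x).trace) = fun x => ∑ k, φ x k k := by
        funext x; simp [Matrix.trace, Matrix.diag]
      rw [he2]
      exact Finset.measurable_sum _ fun k _ => (measurable_entry k k).comp hφm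
    -- the cells
    set Pset : ℕ → Set (Fin n → Matrix (Fin d) (Fin d) ℝ) := fun j =>
      {x | (φ x).PosSemidef ∧ (Qm j - φ x).PosSemidef ∧ (Qm j).trace ≤ (φ x).trace + ε}
      with hPsetdef
    have hsubm : ∀ j, Measurable fun x => Qm j - φ x := by
      intro j
      refine measurable_pi_lambda _ fun k => measurable_pi_lambda _ fun l => ?_
      have he2 : (fun x => (Qm j - φ x) k l) = fun x => Qm j k l - φ x k l := by
        funext x; simp [Matrix.sub_apply]
      rw [he2]
      exact measurable_const.sub ((measurable_entry k l).comp hφm)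
    have hPm : ∀ j, MeasurableSet (Pset j) := by
      intro j
      refine MeasurableSet.inter (hφm measurableSet_posSemidef) (MeasurableSet.inter ?_ ?_)
      · exact (hsubm j) measurableSet_posSemidef
      · exact measurableSet_le measurable_const (hψ.add_const ε)
    set G : ℕ → Set (Fin n → Matrix (Fin d) (Fin d) ℝ) := disjointed Pset with hGdef
    have hGm : ∀ j, MeasurableSet (G j) := MeasurableSet.disjointed hPm
    have hGdisj : Pairwise (Function.onFun Disjoint G) := disjoint_disjointed Pset
    have hGsub : ∀ j, G j ⊆ Pset j := fun j => disjointed_subset Pset j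
    have hGU : ⋃ j, G j = ⋃ j, Pset j := iUnion_disjointed
    -- measurable modification of the data
    set Xv' : Ω → (Fin n → Matrix (Fin d) (Fin d) ℝ) :=
      fun ω i => Matrix.of fun k l => (hL2 i k l).1.mk (fun ω' => X i ω' k l) ω with hXv'def
    have hXv'm : Measurable Xv' := by
      refine measurable_pi_lambda _ fun i => measurable_pi_lambda _ fun k =>
        measurable_pi_lambda _ fun l => ?_
      exact (hL2 i k l).1.stronglyMeasurable_mk.measurable
    have hae : Xv' =ᵐ[μ] (fun ω i => X i ω) := by
      have h1 : ∀ᵐ ω ∂μ, ∀ (i : Fin n) (k l : Fin d),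
          (hL2 i k l).1.mk (fun ω' => X i ω' k l) ω = X i ω k l := by
        rw [ae_all_iff]
        intro i
        rw [ae_all_iff]
        intro k
        rw [ae_all_iff]
        intro l
        exact ((hL2 i k l).1.ae_eq_mk).symm
      filter_upwards [h1] with ω hω
      funext i
      ext k l
      exact hω i k l
    have hindep' : IndepFun Xv' U μ := hindep.congr hae.symm (Filter.EventuallyEq.refl _ U)
    have hN : μ {ω | ¬ Xv' ω = fun i => X i ω} = 0 := by
      have := hae
      rw [Filter.EventuallyEq, ae_iff] at this
      exact this
    -- the U-side sets
    set Tset : ℕ → Set (Matrix (Fin d) (Fin d) ℝ) := fun j => {u | ¬ LoewnerLE (Qm j) u}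
      with hTsetdef
    have hTm : ∀ j, MeasurableSet (Tset j) := by
      intro j
      have he2 : Tset j = ((fun u : Matrix (Fin d) (Fin d) ℝ => u - Qm j) ⁻¹'
          {Y | Y.PosSemidef})ᶜ := rfl
      rw [he2]
      refine (MeasurableSet.preimage measurableSet_posSemidef ?_).compl
      refine measurable_pi_lambda _ fun k => measurable_pi_lambda _ fun l => ?_
      have he3 : (fun u : Matrix (Fin d) (Fin d) ℝ => (u - Qm j) k l)
          = fun u => u k l - Qm j k l := by funext u; simp [Matrix.sub_apply]
      rw [he3]
      exact (measurable_entry k l).sub measurable_const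
    -- event inclusion
    have hincl : {ω | ¬ LoewnerLE (matAbs ((n : ℝ)⁻¹ • ∑ i, X i ω - M))
        (matSqrt (A * U ω * A))} ⊆
        {ω | ¬ Xv' ω = fun i => X i ω} ∪ ⋃ j, (Xv' ⁻¹' G j ∩ U ⁻¹' Tset j) := by
      intro ω hω
      by_cases hωN : Xv' ω = fun i => X i ω
      · right
        have hφX : φ (Xv' ω) = A⁻¹ * (S ω * S ω) * A⁻¹ := by rw [hωN]
        have hpsd : (φ (Xv' ω)).PosSemidef := by
          rw [hφX]
          have := (hSSpsd ω).conjTranspose_mul_mul_same (B := A⁻¹)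
          rwa [hAi.1.eq] at this
        have hnotL : ¬ LoewnerLE (φ (Xv' ω)) (U ω) := by
          intro hcontra
          rw [hφX] at hcontra
          exact hω (event_incl (hSh ω) (hUpsd ω) hA hcontra)
        obtain ⟨q, hq1, hq2⟩ := exists_rat_upper hpsd hε
        obtain ⟨j0, hj0⟩ := he q
        have hx : Xv' ω ∈ Pset j0 := by
          refine ⟨hpsd, ?_, ?_⟩
          · have : Qm j0 = Matrix.of fun k l => ((q k l : ℚ) : ℝ) := by
              rw [hQmdef]; simp only; rw [hj0]
            rw [this]; exact hq1
          · have : Qm j0 = Matrix.of fun k l => ((q k l : ℚ) : ℝ) := by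
              rw [hQmdef]; simp only; rw [hj0]
            rw [this]; exact hq2
        have hmem : Xv' ω ∈ ⋃ j, G j := by
          rw [hGU]; exact Set.mem_iUnion.mpr ⟨j0, hx⟩
        obtain ⟨j, hj⟩ := Set.mem_iUnion.mp hmem
        refine Set.mem_iUnion.mpr ⟨j, ⟨hj, ?_⟩⟩
        intro hL
        exact hnotL (loewner_trans (hGsub j hj).2.1 hL)
      · left; exact hωN
    -- pushforward measure
    set ν : Measure (Fin n → Matrix (Fin d) (Fin d) ℝ) := μ.map Xv' with hνdef
    have hFmeas : Measurable fun x => ENNReal.ofReal ((φ x).trace + ε) :=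
      (hψ.add_const ε).ennreal_ofReal
    -- per-cell bound
    have hcell : ∀ j, μ (Xv' ⁻¹' G j ∩ U ⁻¹' Tset j) ≤
        ∫⁻ x in G j, ENNReal.ofReal ((φ x).trace + ε) ∂ν := by
      intro j
      have hprod : μ (Xv' ⁻¹' G j ∩ U ⁻¹' Tset j)
          = μ (Xv' ⁻¹' G j) * μ (U ⁻¹' Tset j) :=
        (indepFun_iff_measure_inter_preimage_eq_mul.mp hindep') _ _ (hGm j) (hTm j)
      by_cases hQpsd : (Qm j).PosSemidef
      · have hUb : μ (U ⁻¹' Tset j) ≤ ENNReal.ofReal ((Qm j).trace) := hU (Qm j) hQpsd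
        have hs : μ (Xv' ⁻¹' G j) = ν (G j) := (Measure.map_apply hXv'm (hGm j)).symm
        calc μ (Xv' ⁻¹' G j ∩ U ⁻¹' Tset j)
            ≤ μ (Xv' ⁻¹' G j) * ENNReal.ofReal ((Qm j).trace) := by
              rw [hprod]; exact mul_le_mul_right hUb _
          _ = ENNReal.ofReal ((Qm j).trace) * ν (G j) := by rw [hs, mul_comm]
          _ = ∫⁻ _x in G j, ENNReal.ofReal ((Qm j).trace) ∂ν := by
              rw [setLIntegral_const]
          _ ≤ ∫⁻ x in G j, ENNReal.ofReal ((φ x).trace + ε) ∂ν := by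
              refine setLIntegral_mono hFmeas fun x hx => ?_
              exact ENNReal.ofReal_le_ofReal (hGsub j hx).2.2
      · have hempty : Pset j = ∅ := by
          rw [Set.eq_empty_iff_forall_notMem]
          intro x hx
          apply hQpsd
          have h1 := hx.2.1
          have h2 := hx.1
          have := Matrix.PosSemidef.add h1 h2
          rwa [sub_add_cancel] at this
        have hGempty : G j = ∅ := Set.eq_empty_of_subset_empty (hempty ▸ hGsub j)
        have : μ (Xv' ⁻¹' G j ∩ U ⁻¹' Tset j) = 0 := by
          rw [hGempty]
          simp
        rw [this]
        exact zero_le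
    -- sum over cells
    have hsum : (∑' j, ∫⁻ x in G j, ENNReal.ofReal ((φ x).trace + ε) ∂ν)
        ≤ ∫⁻ x, ENNReal.ofReal ((φ x).trace + ε) ∂ν := by
      rw [← lintegral_iUnion hGm hGdisj]
      exact lintegral_mono' Measure.restrict_le_self le_rfl
    -- identify the integral
    have hcomp : (∫⁻ x, ENNReal.ofReal ((φ x).trace + ε) ∂ν)
        = ∫⁻ ω, ENNReal.ofReal ((φ (Xv' ω)).trace + ε) ∂μ := by
      rw [hνdef, lintegral_map hFmeas hXv'm]
    have hfeq : (fun ω => (φ (Xv' ω)).trace + ε)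
        =ᵐ[μ] (fun ω => ((S ω * S ω) * B).trace + ε) := by
      filter_upwards [hae] with ω hω
      rw [hω]
      have htr_id : (A⁻¹ * (S ω * S ω) * A⁻¹).trace = ((S ω * S ω) * B).trace := by
        rw [Matrix.mul_assoc, trace_mul_comm, Matrix.mul_assoc, ← hBdef]
      have : φ (fun i => X i ω) = A⁻¹ * (S ω * S ω) * A⁻¹ := rfl
      rw [this, htr_id]
    have hint2 : Integrable (fun ω => (φ (Xv' ω)).trace + ε) μ :=
      ((htr_int.add (integrable_const ε)).congr hfeq.symm)
    have hnn2 : 0 ≤ᵐ[μ] (fun ω => (φ (Xv' ω)).trace + ε) := by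
      filter_upwards [hfeq] with ω hω
      simp only [Pi.zero_apply]
      rw [hω]
      have := htr_nn ω
      linarith
    have hlid : (∫⁻ ω, ENNReal.ofReal ((φ (Xv' ω)).trace + ε) ∂μ)
        = ENNReal.ofReal (∫ ω, ((φ (Xv' ω)).trace + ε) ∂μ) :=
      (ofReal_integral_eq_lintegral_ofReal hint2 hnn2).symm
    have hival : (∫ ω, ((φ (Xv' ω)).trace + ε) ∂μ) = I + ε := by
      rw [integral_congr_ae hfeq]
      rw [integral_add htr_int (integrable_const ε), integral_const]
      simp [hIdef]
    -- final chain
    calc μ {ω | ¬ LoewnerLE (matAbs ((n : ℝ)⁻¹ • ∑ i, X i ω - M)) (matSqrt (A * U ω * A))}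
        ≤ μ ({ω | ¬ Xv' ω = fun i => X i ω} ∪ ⋃ j, (Xv' ⁻¹' G j ∩ U ⁻¹' Tset j)) :=
          measure_mono hincl
      _ ≤ μ {ω | ¬ Xv' ω = fun i => X i ω} + μ (⋃ j, (Xv' ⁻¹' G j ∩ U ⁻¹' Tset j)) :=
          measure_union_le _ _
      _ = μ (⋃ j, (Xv' ⁻¹' G j ∩ U ⁻¹' Tset j)) := by rw [hN, zero_add]
      _ ≤ ∑' j, μ (Xv' ⁻¹' G j ∩ U ⁻¹' Tset j) := measure_iUnion_le _
      _ ≤ ∑' j, ∫⁻ x in G j, ENNReal.ofReal ((φ x).trace + ε) ∂ν :=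
          ENNReal.tsum_le_tsum hcell
      _ ≤ ∫⁻ x, ENNReal.ofReal ((φ x).trace + ε) ∂ν := hsum
      _ = ENNReal.ofReal (I + ε) := by rw [hcomp, hlid, hival]
  -- combine
  have hIepsilon : μ {ω | ¬ LoewnerLE (matAbs ((n : ℝ)⁻¹ • ∑ i, X i ω - M))
      (matSqrt (A * U ω * A))} ≤ ENNReal.ofReal I := by
    refine ENNReal.le_of_forall_pos_le_add fun ε hε _ => ?_
    calc μ _ ≤ ENNReal.ofReal (I + ε) := key ε (by exact_mod_cast hε)
      _ ≤ ENNReal.ofReal I + ENNReal.ofReal ε := ENNReal.ofReal_add_le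
      _ = ENNReal.ofReal I + ε := by rw [ENNReal.ofReal_coe_nnreal]
  refine hIepsilon.trans (ENNReal.ofReal_le_ofReal ?_)
  exact hVB

end
end

section
/- Let {Yₙ}_{n≥0} be a matrix supermartingale adapted to a filtration {Fₙ} that is almost surely positive semidefinite at every time n, let τ be an almost surely finite stopping time with respect to {Fₙ}, let U be a trace super-uniform random d×d positive semidefinite matrix independent of F_∞, and let A be a d×d symmetric positive definite matrix. Then P( Y_τ ⋠ A^{1/2} U A^{1/2} ) ≤ tr( E[Y₀] · A⁻¹ ). -/
open MeasureTheory ProbabilityTheory Matrix Filter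

noncomputable section

-- ==== aux lemmas ====
def Matrix.PosSemidef.sqrt {d : ℕ} {A : Matrix (Fin d) (Fin d) ℝ} (hA : A.PosSemidef) :
    Matrix (Fin d) (Fin d) ℝ :=
  (hA.1.eigenvectorUnitary : Matrix (Fin d) (Fin d) ℝ) *
    Matrix.diagonal (fun i => Real.sqrt (hA.1.eigenvalues i)) *
    star (hA.1.eigenvectorUnitary : Matrix (Fin d) (Fin d) ℝ)

lemma Matrix.PosSemidef.posSemidef_sqrt {d : ℕ} {A : Matrix (Fin d) (Fin d) ℝ}
    (hA : A.PosSemidef) : hA.sqrt.PosSemidef := by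
  have hD : (Matrix.diagonal (fun i => Real.sqrt (hA.1.eigenvalues i))).PosSemidef :=
    Matrix.PosSemidef.diagonal (fun i => Real.sqrt_nonneg _)
  have := hD.mul_mul_conjTranspose_same (hA.1.eigenvectorUnitary : Matrix (Fin d) (Fin d) ℝ)
  rwa [← Matrix.star_eq_conjTranspose] at this

lemma Matrix.PosSemidef.sqrt_mul_self {d : ℕ} {A : Matrix (Fin d) (Fin d) ℝ}
    (hA : A.PosSemidef) : hA.sqrt * hA.sqrt = A := by
  set U : Matrix (Fin d) (Fin d) ℝ := (hA.1.eigenvectorUnitary : Matrix (Fin d) (Fin d) ℝ)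
  set D : Matrix (Fin d) (Fin d) ℝ := Matrix.diagonal (fun i => Real.sqrt (hA.1.eigenvalues i))
  have hU : star U * U = 1 := Unitary.coe_star_mul_self _
  have hDD : D * D = Matrix.diagonal (RCLike.ofReal ∘ hA.1.eigenvalues) := by
    rw [Matrix.diagonal_mul_diagonal]; congr 1; funext i
    simp [Real.mul_self_sqrt (hA.eigenvalues_nonneg i)]
  conv_rhs => rw [hA.1.spectral_theorem, Unitary.conjStarAlgAut_apply]
  change U * D * star U * (U * D * star U) = _
  rw [← hDD, show U * D * star U * (U * D * star U) = U * D * (star U * U) * D * star U by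
    simp only [mul_assoc], hU, mul_one]
  simp only [mul_assoc]
  rfl

lemma aux_matSqrt_eq {d : ℕ} {A : Matrix (Fin d) (Fin d) ℝ} (hA : A.PosSemidef) :
    matSqrt A = hA.sqrt := by
  rw [matSqrt, matCFC, dif_pos hA.1, Matrix.PosSemidef.sqrt]

lemma aux_trace_psd_nonneg {d : ℕ} {M : Matrix (Fin d) (Fin d) ℝ} (hM : M.PosSemidef) :
    0 ≤ M.trace := by
  rw [Matrix.trace]
  exact Finset.sum_nonneg fun i _ => by simpa using hM.dotProduct_mulVec_nonneg (Pi.single i 1)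

lemma aux_trace_mul_psd_nonneg {d : ℕ} {P Q : Matrix (Fin d) (Fin d) ℝ}
    (hP : P.PosSemidef) (hQ : Q.PosSemidef) : 0 ≤ (P * Q).trace := by
  have h1 : P = hP.sqrt * hP.sqrt := hP.sqrt_mul_self.symm
  have h2 : (P * Q).trace = (hP.sqrt * Q * hP.sqrt).trace := by
    conv_lhs => rw [h1]
    rw [mul_assoc, Matrix.trace_mul_cycle, ← mul_assoc]
  rw [h2]
  have h3 : (hP.sqrt * Q * hP.sqrt).PosSemidef := by
    have := hQ.mul_mul_conjTranspose_same hP.sqrt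
    rwa [hP.posSemidef_sqrt.1.eq] at this
  exact aux_trace_psd_nonneg h3

lemma aux_conj_psd {d : ℕ} {X R : Matrix (Fin d) (Fin d) ℝ} (hX : X.PosSemidef)
    (hR : R.IsHermitian) : (R * X * R).PosSemidef := by
  have := hX.mul_mul_conjTranspose_same R
  rwa [hR.eq] at this

lemma aux_inv_conj_cancel {d : ℕ} {R : Matrix (Fin d) (Fin d) ℝ} (hdet : IsUnit R.det)
    (u : Matrix (Fin d) (Fin d) ℝ) : R⁻¹ * (R * u * R) * R⁻¹ = u := by
  rw [← mul_assoc, ← mul_assoc, Matrix.nonsing_inv_mul R hdet, one_mul,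
    mul_assoc, Matrix.mul_nonsing_inv R hdet, mul_one]

lemma aux_loewner_conj {d : ℕ} {R : Matrix (Fin d) (Fin d) ℝ} (hR : R.IsHermitian)
    (hdet : IsUnit R.det) (w u : Matrix (Fin d) (Fin d) ℝ) :
    LoewnerLE w (R * u * R) ↔ LoewnerLE (R⁻¹ * w * R⁻¹) u := by
  have hRinv : (R⁻¹).IsHermitian := hR.inv
  constructor
  · intro h
    have h2 := aux_conj_psd (X := R * u * R - w) h hRinv
    have h3 : R⁻¹ * (R * u * R - w) * R⁻¹ = u - R⁻¹ * w * R⁻¹ := by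
      rw [Matrix.mul_sub, Matrix.sub_mul, aux_inv_conj_cancel hdet]
    rwa [h3] at h2
  · intro h
    have h2 := aux_conj_psd (X := u - R⁻¹ * w * R⁻¹) h hR
    have h3 : R * (u - R⁻¹ * w * R⁻¹) * R = R * u * R - w := by
      rw [Matrix.mul_sub, Matrix.sub_mul]
      congr 1
      rw [← mul_assoc, ← mul_assoc, Matrix.mul_nonsing_inv R hdet, one_mul,
        mul_assoc, Matrix.nonsing_inv_mul R hdet, mul_one]
    rwa [h3] at h2

lemma aux_loewner_mono {d : ℕ} {v w X : Matrix (Fin d) (Fin d) ℝ}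
    (hvw : (w - v).PosSemidef) (h : LoewnerLE w X) : LoewnerLE v X := by
  have := h.add hvw
  rwa [sub_add_sub_cancel] at this

lemma aux_psd_of_entry_bound {d : ℕ} {S : Matrix (Fin d) (Fin d) ℝ} (hS : S.IsHermitian)
    {δ : ℝ} (hδ : 0 ≤ δ) (h : ∀ i j, |S i j| ≤ δ) :
    ((d * δ) • (1 : Matrix (Fin d) (Fin d) ℝ) - S).PosSemidef := by
  refine Matrix.PosSemidef.of_dotProduct_mulVec_nonneg ?_ ?_
  · have h1 : ((d * δ) • (1 : Matrix (Fin d) (Fin d) ℝ)).IsHermitian := by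
      simp [Matrix.IsHermitian]
    exact h1.sub hS
  · intro x
    have hx : star x = x := by simp
    rw [hx, Matrix.sub_mulVec, dotProduct_sub, Matrix.smul_mulVec, Matrix.one_mulVec,
      dotProduct_smul, sub_nonneg]
    have h1 : dotProduct x (S *ᵥ x) ≤ δ * (∑ i, |x i|) ^ 2 := by
      have he : dotProduct x (S *ᵥ x) = ∑ i, ∑ j, x i * (S i j * x j) := by
        simp [dotProduct, Matrix.mulVec, Finset.mul_sum]
      rw [he]
      have hb : ∀ i j : Fin d, x i * (S i j * x j) ≤ |x i| * |x j| * δ := by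
        intro i j
        calc x i * (S i j * x j) ≤ |x i * (S i j * x j)| := le_abs_self _
          _ = |x i| * |x j| * |S i j| := by rw [abs_mul, abs_mul]; ring
          _ ≤ |x i| * |x j| * δ := mul_le_mul_of_nonneg_left (h i j) (by positivity)
      calc ∑ i, ∑ j, x i * (S i j * x j) ≤ ∑ i, ∑ j, |x i| * |x j| * δ :=
            Finset.sum_le_sum fun i _ => Finset.sum_le_sum fun j _ => hb i j
        _ = δ * (∑ i, |x i|) ^ 2 := by
            rw [sq, Finset.sum_mul_sum, Finset.mul_sum]
            refine Finset.sum_congr rfl fun i _ => ?_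
            rw [Finset.mul_sum]
            exact Finset.sum_congr rfl fun j _ => by ring
    have h2 : (∑ i, |x i|) ^ 2 ≤ (d : ℝ) * ∑ i, |x i| ^ 2 := by
      simpa using sq_sum_le_card_mul_sum_sq (s := Finset.univ) (f := fun i : Fin d => |x i|)
    have h3 : ∑ i, |x i| ^ 2 = dotProduct x x := by
      simp [dotProduct, sq_abs, sq]
    calc dotProduct x (S *ᵥ x) ≤ δ * (∑ i, |x i|) ^ 2 := h1
      _ ≤ δ * ((d : ℝ) * dotProduct x x) := by
          refine mul_le_mul_of_nonneg_left ?_ hδ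
          rw [← h3]; simpa using h2
      _ = (d * δ) • dotProduct x x := by rw [smul_eq_mul]; ring

lemma aux_measurable_entry {d : ℕ} (i j : Fin d) :
    Measurable (fun M : Matrix (Fin d) (Fin d) ℝ => M i j) :=
  (measurable_pi_apply j).comp (measurable_pi_apply i)

lemma aux_measurable_quadform {d : ℕ} (x : Fin d → ℝ) :
    Measurable (fun M : Matrix (Fin d) (Fin d) ℝ => dotProduct x (M *ᵥ x)) := by
  simp only [dotProduct, Matrix.mulVec]
  refine Finset.measurable_sum _ fun i _ => Measurable.mul measurable_const ?_
  exact Finset.measurable_sum _ fun j _ => ((aux_measurable_entry i j).mul measurable_const)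

lemma aux_continuous_quadform {d : ℕ} (M : Matrix (Fin d) (Fin d) ℝ) :
    Continuous (fun x : Fin d → ℝ => dotProduct x (M *ᵥ x)) := by
  simp only [dotProduct, Matrix.mulVec]
  refine continuous_finset_sum _ fun i _ => ?_
  exact (continuous_apply i).mul (continuous_finset_sum _ fun j _ =>
    (continuous_const.mul (continuous_apply j)))

lemma aux_dense_rat_vectors {d : ℕ} :
    Dense {x : Fin d → ℝ | ∀ i, ∃ q : ℚ, (q : ℝ) = x i} := by
  have hd := dense_pi (ι := Fin d) (α := fun _ => ℝ)
    (s := fun _ => Set.range (fun q : ℚ => (q : ℝ))) Set.univ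
    (fun i _ => Rat.denseRange_cast)
  have heq : Set.pi Set.univ (fun _ : Fin d => Set.range (fun q : ℚ => (q : ℝ)))
      = {x : Fin d → ℝ | ∀ i, ∃ q : ℚ, (q : ℝ) = x i} := by
    ext x; simp [Set.mem_pi, Set.mem_range]
  rwa [heq] at hd

lemma aux_posSemidef_iff_rat {d : ℕ} (M : Matrix (Fin d) (Fin d) ℝ) :
    M.PosSemidef ↔ M.IsHermitian ∧
      ∀ q : Fin d → ℚ, 0 ≤ dotProduct (fun i => (q i : ℝ)) (M *ᵥ fun i => (q i : ℝ)) := by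
  constructor
  · intro h
    exact ⟨h.1, fun q => by simpa using h.dotProduct_mulVec_nonneg (fun i => (q i : ℝ))⟩
  · rintro ⟨hH, hq⟩
    refine Matrix.PosSemidef.of_dotProduct_mulVec_nonneg hH fun x => ?_
    have hx : star x = x := by simp
    rw [hx]
    have hC : IsClosed {x : Fin d → ℝ | 0 ≤ dotProduct x (M *ᵥ x)} :=
      isClosed_le continuous_const (aux_continuous_quadform M)
    have hsub : {x : Fin d → ℝ | ∀ i, ∃ q : ℚ, (q : ℝ) = x i}
        ⊆ {x : Fin d → ℝ | 0 ≤ dotProduct x (M *ᵥ x)} := by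
      intro x hx'
      choose q hq' using hx'
      have hxe : x = fun i => (q i : ℝ) := funext fun i => (hq' i).symm
      rw [hxe]; exact hq q
    have hdense : Dense {x : Fin d → ℝ | 0 ≤ dotProduct x (M *ᵥ x)} :=
      aux_dense_rat_vectors.mono hsub
    have huniv : {x : Fin d → ℝ | 0 ≤ dotProduct x (M *ᵥ x)} = Set.univ := by
      rw [← (hC.closure_subset).antisymm subset_closure]
      exact hdense.closure_eq
    exact (Set.eq_univ_iff_forall.mp huniv) x

lemma aux_measurableSet_posSemidef {d : ℕ} :
    MeasurableSet {M : Matrix (Fin d) (Fin d) ℝ | M.PosSemidef} := by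
  have hset : {M : Matrix (Fin d) (Fin d) ℝ | M.PosSemidef} =
      (⋂ i, ⋂ j, {M : Matrix (Fin d) (Fin d) ℝ | M j i = M i j}) ∩
      ⋂ q : Fin d → ℚ, {M | 0 ≤ dotProduct (fun i => (q i : ℝ)) (M *ᵥ fun i => (q i : ℝ))} := by
    ext M
    rw [Set.mem_setOf_eq, aux_posSemidef_iff_rat]
    simp only [Set.mem_inter_iff, Set.mem_iInter, Set.mem_setOf_eq]
    constructor
    · rintro ⟨hH, hq⟩
      exact ⟨fun i j => congrFun (congrFun hH i) j, hq⟩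
    · rintro ⟨hH, hq⟩
      refine ⟨?_, hq⟩
      ext i j
      simpa using hH i j
  rw [hset]
  refine MeasurableSet.inter ?_ ?_
  · exact MeasurableSet.iInter fun i => MeasurableSet.iInter fun j =>
      measurableSet_eq_fun (aux_measurable_entry j i) (aux_measurable_entry i j)
  · exact MeasurableSet.iInter fun q =>
      measurableSet_le measurable_const (aux_measurable_quadform _)

lemma aux_trace_mul_pair {d : ℕ} (M N : Matrix (Fin d) (Fin d) ℝ) :
    (M * N).trace = ∑ p : Fin d × Fin d, M p.1 p.2 * N p.2 p.1 := by
  rw [← Finset.univ_product_univ, Finset.sum_product]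
  simp [Matrix.trace, Matrix.diag, Matrix.mul_apply]

lemma aux_measurable_conj {d : ℕ} (R w : Matrix (Fin d) (Fin d) ℝ) :
    Measurable (fun u : Matrix (Fin d) (Fin d) ℝ => R * u * R - w) := by
  refine measurable_pi_lambda _ fun a => measurable_pi_lambda _ fun b => ?_
  have he : (fun u : Matrix (Fin d) (Fin d) ℝ => (R * u * R - w) a b)
      = fun u => (∑ q, (∑ p, R a p * u p q) * R q b) - w a b := by
    funext u
    simp [Matrix.sub_apply, Matrix.mul_apply]
  rw [he]
  refine Measurable.sub ?_ measurable_const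
  refine Finset.measurable_sum _ fun q _ => Measurable.mul ?_ measurable_const
  exact Finset.measurable_sum _ fun p _ => (aux_measurable_entry p q).const_mul _

lemma aux_measurable_matrix {Ω : Type*} {m : MeasurableSpace Ω} {d : ℕ}
    {f : Ω → Matrix (Fin d) (Fin d) ℝ} (h : ∀ i j, Measurable[m] fun ω => f ω i j) :
    Measurable[m] f :=
  measurable_pi_lambda _ fun i => measurable_pi_lambda _ fun j => h i j

/-- **Uniformly randomized matrix Ville's inequality (stopped form).**
For an a.s. positive semidefinite matrix supermartingale `Y`, a finite stopping time `τ`, a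
trace super-uniform random PSD matrix `U` independent of `F_∞`, and `A ≻ 0`:
`P( Y_τ ⋠ A^{1/2} U A^{1/2} ) ≤ tr( E[Y₀] A⁻¹ )`. -/
theorem stmt10 {Ω : Type*} {m0 : MeasurableSpace Ω} (μ : Measure Ω) [IsProbabilityMeasure μ]
    {d : ℕ} (ℱ : Filtration ℕ m0)
    (Y : ℕ → Ω → Matrix (Fin d) (Fin d) ℝ)
    (hY : IsMatrixSupermartingale ℱ μ Y)
    (hpos : ∀ n, ∀ᵐ ω ∂μ, (Y n ω).PosSemidef)
    (τ : Ω → ℕ) (hτ : IsStoppingTime ℱ (fun ω => (τ ω : WithTop ℕ)))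
    (U : Ω → Matrix (Fin d) (Fin d) ℝ)
    (hUpsd : ∀ ω, (U ω).PosSemidef)
    (hU : TraceSuperUniform μ U)
    (hUindep : Indep (MeasurableSpace.comap U (matMS d)) (⨆ n, (ℱ n : MeasurableSpace Ω)) μ)
    (A : Matrix (Fin d) (Fin d) ℝ) (hA : A.PosDef) :
    μ {ω | ¬ LoewnerLE (Y (τ ω) ω) (matSqrt A * U ω * matSqrt A)} ≤
      ENNReal.ofReal ((matExpect μ (Y 0) * A⁻¹).trace) := by
  classical
  obtain ⟨hHerm, hAdapt, hInt, hSuper⟩ := hY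
  have hApsd : A.PosSemidef := hA.posSemidef
  set R : Matrix (Fin d) (Fin d) ℝ := matSqrt A with hRdef
  have hReq : R = hApsd.sqrt := aux_matSqrt_eq hApsd
  have hRpsd : R.PosSemidef := by rw [hReq]; exact hApsd.posSemidef_sqrt
  have hRherm : R.IsHermitian := hRpsd.1
  have hRR : R * R = A := by rw [hReq]; exact hApsd.sqrt_mul_self
  have hRdet : IsUnit R.det := by
    refine isUnit_iff_ne_zero.mpr fun h0 => ?_
    have hAdet : A.det = 0 := by rw [← hRR, Matrix.det_mul, h0, mul_zero]
    exact hA.det_pos.ne' hAdet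
  have hBpd : (A⁻¹).PosDef := hA.inv
  set B : Matrix (Fin d) (Fin d) ℝ := A⁻¹ with hBdef
  have hBpsd : B.PosSemidef := hBpd.posSemidef
  have hRinvinv : R⁻¹ * R⁻¹ = B := by rw [hBdef, ← hRR, Matrix.mul_inv_rev]
  -- the scalar supermartingale
  set Z : ℕ → Ω → ℝ := fun n ω => (Y n ω * B).trace with hZdef
  have hZentry : ∀ n ω, Z n ω = ∑ p : Fin d × Fin d, Y n ω p.1 p.2 * B p.2 p.1 :=
    fun n ω => aux_trace_mul_pair _ _
  have hZfun : ∀ n, Z n = fun ω => ∑ p : Fin d × Fin d, Y n ω p.1 p.2 * B p.2 p.1 :=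
    fun n => funext (hZentry n)
  have hZsm : ∀ n, StronglyMeasurable[ℱ n] (Z n) := by
    intro n
    rw [hZfun n]
    exact Finset.stronglyMeasurable_fun_sum _ fun p _ => (hAdapt n p.1 p.2).mul_const _
  have hZint : ∀ n, Integrable (Z n) μ := by
    intro n
    rw [hZfun n]
    exact integrable_finset_sum _ fun p _ => (hInt n p.1 p.2).mul_const _
  have hZcond : ∀ n, μ[Z (n+1) | ℱ n] ≤ᵐ[μ] Z n := by
    intro n
    have hce : μ[Z (n+1) | ℱ n]
        =ᵐ[μ] fun ω => (matCondExp μ (ℱ n) (Y (n+1)) ω * B).trace := by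
      have h1 : Z (n+1) = ∑ p : Fin d × Fin d, fun ω => Y (n+1) ω p.1 p.2 * B p.2 p.1 := by
        funext ω
        rw [hZentry]
        simp [Finset.sum_apply]
      rw [h1]
      have h2 := condExp_finsetSum (μ := μ) (m := ℱ n) (s := Finset.univ)
        (f := fun (p : Fin d × Fin d) => fun ω => Y (n+1) ω p.1 p.2 * B p.2 p.1)
        (fun p _ => (hInt (n+1) p.1 p.2).mul_const _)
      refine h2.trans ?_
      have h3 : ∀ p : Fin d × Fin d, μ[fun ω => Y (n+1) ω p.1 p.2 * B p.2 p.1 | ℱ n]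
          =ᵐ[μ] fun ω => (μ[fun ω' => Y (n+1) ω' p.1 p.2 | ℱ n]) ω * B p.2 p.1 := by
        intro p
        have h4 := condExp_smul (μ := μ) (m := ℱ n) (B p.2 p.1)
          (fun ω => Y (n+1) ω p.1 p.2)
        have h5 : (fun ω => Y (n+1) ω p.1 p.2 * B p.2 p.1)
            = B p.2 p.1 • fun ω => Y (n+1) ω p.1 p.2 := by
          funext ω
          simp [mul_comm]
        rw [h5]
        refine h4.trans ?_
        filter_upwards with ω
        simp [mul_comm]
      have h6 : ∀ᵐ ω ∂μ, ∀ p : Fin d × Fin d,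
          (μ[fun ω' => Y (n+1) ω' p.1 p.2 * B p.2 p.1 | ℱ n]) ω
          = (μ[fun ω' => Y (n+1) ω' p.1 p.2 | ℱ n]) ω * B p.2 p.1 := by
        rw [ae_all_iff]
        exact fun p => h3 p
      filter_upwards [h6] with ω hω
      rw [Finset.sum_apply]
      rw [aux_trace_mul_pair]
      exact Finset.sum_congr rfl fun p _ => hω p
    have hle : ∀ᵐ ω ∂μ, (matCondExp μ (ℱ n) (Y (n+1)) ω * B).trace ≤ Z n ω := by
      filter_upwards [hSuper n] with ω hω
      have h7 : 0 ≤ ((Y n ω - matCondExp μ (ℱ n) (Y (n+1)) ω) * B).trace :=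
        aux_trace_mul_psd_nonneg hω hBpsd
      rw [Matrix.sub_mul, Matrix.trace_sub] at h7
      linarith
    filter_upwards [hce, hle] with ω h1 h2
    rw [h1]
    exact h2
  have hZsuper : Supermartingale Z ℱ μ :=
    supermartingale_nat (fun n => hZsm n) hZint hZcond
  have hZnn : ∀ n, 0 ≤ᵐ[μ] Z n := by
    intro n
    filter_upwards [hpos n] with ω hω
    exact aux_trace_mul_psd_nonneg hω hBpsd
  -- optional stopping at bounded times
  have hOS : ∀ n : ℕ, ∫ ω, stoppedValue Z (fun ω' => min (τ ω') n) ω ∂μ ≤ ∫ ω, Z 0 ω ∂μ := by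
    intro n
    have hsub : Submartingale (-Z) ℱ μ := hZsuper.neg
    have h0 : IsStoppingTime ℱ (fun _ : Ω => 0) := isStoppingTime_const ℱ 0
    have hmin : IsStoppingTime ℱ fun ω => min (τ ω) n := hτ.min_const n
    have h1 := hsub.expected_stoppedValue_mono h0 hmin
      (fun ω => le_min (WithTop.coe_le_coe.mpr (Nat.zero_le _))
        (WithTop.coe_le_coe.mpr (Nat.zero_le _))) (N := n) (fun ω => min_le_right _ _)
    have he0 : ∫ ω, stoppedValue (-Z) (fun _ : Ω => 0) ω ∂μ = - ∫ ω, Z 0 ω ∂μ := by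
      rw [← integral_neg]
      rfl
    have hem : ∫ ω, stoppedValue (-Z) (fun ω' => min (τ ω') n) ω ∂μ
        = - ∫ ω, stoppedValue Z (fun ω' => min (τ ω') n) ω ∂μ := by
      rw [← integral_neg]
      rfl
    rw [he0, hem] at h1
    linarith
  -- Part B : lintegral of the stopped value
  have hPartB : ∫⁻ ω, ENNReal.ofReal (Z (τ ω) ω) ∂μ ≤ ENNReal.ofReal (∫ ω, Z 0 ω ∂μ) := by
    set g : ℕ → Ω → ENNReal :=
      fun n ω => ENNReal.ofReal (stoppedValue Z (fun ω' => min (τ ω') n) ω) with hgdef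
    have hgmeas : ∀ n, Measurable (g n) := by
      intro n
      have hsm : StronglyMeasurable[m0] (stoppedValue Z (fun ω' => min (τ ω') n)) :=
        (stronglyMeasurable_stoppedValue_of_le
          (StronglyAdapted.progMeasurable_of_discrete (fun n => hZsm n)) (hτ.min_const n)
          (fun ω => min_le_right _ _)).mono (ℱ.le n)
      exact hsm.measurable.ennreal_ofReal
    have hlim : ∀ ω, ENNReal.ofReal (Z (τ ω) ω) = liminf (fun n => g n ω) atTop := by
      intro ω
      have hev : (fun _ : ℕ => ENNReal.ofReal (Z (τ ω) ω)) =ᶠ[atTop] fun n => g n ω := by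
        filter_upwards [eventually_ge_atTop (τ ω)] with n hn
        simp only [hgdef, stoppedValue]
        congr 2; rw [min_eq_left (by exact_mod_cast hn)]; rfl
      exact ((Filter.Tendsto.congr' hev tendsto_const_nhds).liminf_eq).symm
    calc ∫⁻ ω, ENNReal.ofReal (Z (τ ω) ω) ∂μ
        = ∫⁻ ω, liminf (fun n => g n ω) atTop ∂μ := lintegral_congr hlim
      _ ≤ liminf (fun n => ∫⁻ ω, g n ω ∂μ) atTop := lintegral_liminf_le hgmeas
      _ ≤ ENNReal.ofReal (∫ ω, Z 0 ω ∂μ) := by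
          refine liminf_le_of_frequently_le' (Filter.Frequently.of_forall fun n => ?_)
          have hint : Integrable (stoppedValue Z (fun ω' => min (τ ω') n)) μ :=
            integrable_stoppedValue ℕ (hτ.min_const n) hZint (fun ω => min_le_right _ _)
          have hnn : 0 ≤ᵐ[μ] stoppedValue Z (fun ω' => min (τ ω') n) := by
            filter_upwards [ae_all_iff.mpr hZnn] with ω hω
            exact hω _
          have heq : ∫⁻ ω, g n ω ∂μ
              = ENNReal.ofReal (∫ ω, stoppedValue Z (fun ω' => min (τ ω') n) ω ∂μ) :=
            (ofReal_integral_eq_lintegral_ofReal hint hnn).symm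
          rw [heq]
          exact ENNReal.ofReal_le_ofReal (hOS n)
  -- expectation and trace swap
  have hTr : ∫ ω, Z 0 ω ∂μ = (matExpect μ (Y 0) * B).trace := by
    rw [aux_trace_mul_pair]
    have h1 : ∫ ω, Z 0 ω ∂μ = ∫ ω, ∑ p : Fin d × Fin d, Y 0 ω p.1 p.2 * B p.2 p.1 ∂μ := by
      rw [hZfun 0]
    rw [h1, integral_finset_sum _ (fun p _ => (hInt 0 p.1 p.2).mul_const _)]
    refine Finset.sum_congr rfl fun p _ => ?_
    rw [integral_mul_const]
    rfl
    -- measurability infrastructure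
  have hm8le : (⨆ n, (ℱ n : MeasurableSpace Ω)) ≤ m0 := iSup_le fun n => ℱ.le n
  have hYmeas : ∀ n, Measurable[ℱ n] (fun ω => Y n ω) := fun n =>
    aux_measurable_matrix (fun i j => (hAdapt n i j).measurable)
  set V : Ω → Matrix (Fin d) (Fin d) ℝ := fun ω => Y (τ ω) ω with hVdef
  have hVherm : ∀ ω, (V ω).IsHermitian := fun ω => hHerm _ ω
  have hVpre : ∀ s : Set (Matrix (Fin d) (Fin d) ℝ), MeasurableSet s →
      MeasurableSet[⨆ n, (ℱ n : MeasurableSpace Ω)] (V ⁻¹' s) := by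
    intro s hs
    have hdecomp : V ⁻¹' s = ⋃ n, ({ω | τ ω = n} ∩ (fun ω => Y n ω) ⁻¹' s) := by
      ext ω
      simp only [Set.mem_preimage, Set.mem_iUnion, Set.mem_inter_iff, Set.mem_setOf_eq]
      constructor
      · intro h; exact ⟨τ ω, rfl, h⟩
      · rintro ⟨n, hn, h⟩; subst hn; exact h
    rw [hdecomp]
    refine MeasurableSet.iUnion fun n => ?_
    have h1 : MeasurableSet[ℱ n] {ω | τ ω = n} := by simpa using hτ.measurableSet_eq n
    have h2 : MeasurableSet[ℱ n] ((fun ω => Y n ω) ⁻¹' s) := hYmeas n hs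
    exact (le_iSup (fun n => (ℱ n : MeasurableSpace Ω)) n) _ (h1.inter h2)
  have hVmeas : Measurable V := fun s hs => hm8le _ (hVpre s hs)
  have hZtmeas : Measurable (fun ω => Z (τ ω) ω) := by
    have he : (fun ω => Z (τ ω) ω) = fun ω => ∑ p : Fin d × Fin d, V ω p.1 p.2 * B p.2 p.1 := by
      funext ω; exact hZentry _ ω
    rw [he]
    exact Finset.measurable_sum _ fun p _ =>
      (((aux_measurable_entry p.1 p.2).comp hVmeas).mul_const _)
  -- the good set G
  set G : Set Ω := ⋂ n, (fun ω => Y n ω) ⁻¹' {M | M.PosSemidef} with hGdef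
  have hGm8 : MeasurableSet[⨆ n, (ℱ n : MeasurableSpace Ω)] G :=
    MeasurableSet.iInter fun n =>
      (le_iSup (fun n => (ℱ n : MeasurableSpace Ω)) n) _ (hYmeas n aux_measurableSet_posSemidef)
  have hGc : μ Gᶜ = 0 := by
    rw [hGdef, Set.compl_iInter]
    refine measure_iUnion_null fun n => ?_
    have hae := ae_iff.mp (hpos n)
    have heq : ((fun ω => Y n ω) ⁻¹' {M | M.PosSemidef})ᶜ = {ω | ¬ (Y n ω).PosSemidef} := by
      ext ω; simp
    rw [heq]
    exact hae
  set E : Set Ω := {ω | ¬ LoewnerLE (V ω) (R * U ω * R)} with hEdef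
  -- constants
  set C0 : ℝ := ∑ p : Fin d × Fin d, |B p.2 p.1| with hC0def
  set C : ℝ := C0 + d * B.trace with hCdef
  have hC0nn : 0 ≤ C0 := Finset.sum_nonneg fun p _ => abs_nonneg _
  have hCnn : 0 ≤ C :=
    add_nonneg hC0nn (mul_nonneg (Nat.cast_nonneg d) (aux_trace_psd_nonneg hBpsd))
  have hstep : ∀ δ : ℝ, 0 < δ →
      μ E ≤ ENNReal.ofReal (∫ ω, Z 0 ω ∂μ) + ENNReal.ofReal (δ * C) := by
    intro δ hδ
    set cell : (Fin d → Fin d → ℤ) → Set (Matrix (Fin d) (Fin d) ℝ) := fun k =>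
      {M | ∀ i j, (k i j : ℝ) * δ ≤ M i j ∧ M i j < ((k i j : ℝ) + 1) * δ} with hcelldef
    have hcellmeas : ∀ k, MeasurableSet (cell k) := by
      intro k
      have he : cell k = ⋂ i, ⋂ j, (fun M : Matrix (Fin d) (Fin d) ℝ => M i j) ⁻¹'
          (Set.Ico ((k i j : ℝ) * δ) (((k i j : ℝ) + 1) * δ)) := by
        ext M
        simp [hcelldef, Set.mem_Ico, Set.mem_iInter]
      rw [he]
      exact MeasurableSet.iInter fun i => MeasurableSet.iInter fun j =>
        (aux_measurable_entry i j) measurableSet_Ico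
    have hmemcell : ∀ M : Matrix (Fin d) (Fin d) ℝ, M ∈ cell (fun i j => ⌊M i j / δ⌋) := by
      intro M
      intro i j
      constructor
      · calc (⌊M i j / δ⌋ : ℝ) * δ ≤ (M i j / δ) * δ :=
            mul_le_mul_of_nonneg_right (Int.floor_le _) hδ.le
          _ = M i j := div_mul_cancel₀ _ hδ.ne'
      · calc M i j = (M i j / δ) * δ := (div_mul_cancel₀ _ hδ.ne').symm
          _ < ((⌊M i j / δ⌋ : ℝ) + 1) * δ :=
            mul_lt_mul_of_pos_right (Int.lt_floor_add_one _) hδ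
    have huniq : ∀ (M : Matrix (Fin d) (Fin d) ℝ) k, M ∈ cell k →
        k = fun i j => ⌊M i j / δ⌋ := by
      intro M k hk
      funext i j
      obtain ⟨h1, h2⟩ := hk i j
      symm
      rw [Int.floor_eq_iff]
      constructor
      · rwa [le_div_iff₀ hδ]
      · rw [div_lt_iff₀ hδ]
        exact_mod_cast h2
    set v0 : (Fin d → Fin d → ℤ) → Matrix (Fin d) (Fin d) ℝ := fun k =>
      if hk : ∃ v, v ∈ cell k ∧ v.PosSemidef then Classical.choose hk else 0 with hv0def
    set w : (Fin d → Fin d → ℤ) → Matrix (Fin d) (Fin d) ℝ := fun k =>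
      v0 k + ((d : ℝ) * δ) • 1 with hwdef
    set K : Set (Fin d → Fin d → ℤ) := {k | ∃ v, v ∈ cell k ∧ v.PosSemidef} with hKdef
    have hv0spec : ∀ k ∈ K, v0 k ∈ cell k ∧ (v0 k).PosSemidef := by
      intro k hk
      have hv0k : v0 k = Classical.choose hk := by
        simp only [hv0def]
        exact dif_pos hk
      rw [hv0k]
      exact Classical.choose_spec hk
    have hsmulpsd : (((d : ℝ) * δ) • (1 : Matrix (Fin d) (Fin d) ℝ)).PosSemidef := by
      rw [Matrix.smul_one_eq_diagonal]
      exact Matrix.PosSemidef.diagonal (fun i => by positivity)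
    have hwpsd : ∀ k ∈ K, (w k).PosSemidef := fun k hk => ((hv0spec k hk).2).add hsmulpsd
    have hdom : ∀ k ∈ K, ∀ v ∈ cell k, v.IsHermitian → (w k - v).PosSemidef := by
      intro k hk v hv hvherm
      have hS : (v - v0 k).IsHermitian := hvherm.sub (hv0spec k hk).2.1
      have hbd : ∀ i j, |(v - v0 k) i j| ≤ δ := by
        intro i j
        rw [Matrix.sub_apply]
        obtain ⟨ha1, ha2⟩ := hv i j
        obtain ⟨hb1, hb2⟩ := (hv0spec k hk).1 i j
        rw [abs_le]
        constructor <;> linarith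
      have hps := aux_psd_of_entry_bound hS hδ.le hbd
      have heq : ((d : ℝ) * δ) • (1 : Matrix (Fin d) (Fin d) ℝ) - (v - v0 k) = w k - v := by
        rw [hwdef]
        ext i j; simp only [Matrix.sub_apply, Matrix.add_apply]; ring
      rwa [heq] at hps
    have htrwk : ∀ k ∈ K, ∀ v ∈ cell k, (w k * B).trace ≤ (v * B).trace + δ * C := by
      intro k hk v hv
      have h1 : (w k * B).trace = (v0 k * B).trace + (d : ℝ) * δ * B.trace := by
        rw [hwdef, Matrix.add_mul, Matrix.trace_add, Matrix.smul_mul, Matrix.one_mul,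
          Matrix.trace_smul, smul_eq_mul]
      have h2 : (v0 k * B).trace ≤ (v * B).trace + δ * C0 := by
        have hd2 : (v0 k * B).trace - (v * B).trace = ((v0 k - v) * B).trace := by
          rw [Matrix.sub_mul, Matrix.trace_sub]
        have hb : ((v0 k - v) * B).trace ≤ δ * C0 := by
          rw [aux_trace_mul_pair, hC0def, Finset.mul_sum]
          refine Finset.sum_le_sum fun p _ => ?_
          have h3 : |(v0 k - v) p.1 p.2| ≤ δ := by
            rw [Matrix.sub_apply]
            obtain ⟨ha1, ha2⟩ := hv p.1 p.2
            obtain ⟨hb1, hb2⟩ := (hv0spec k hk).1 p.1 p.2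
            rw [abs_le]
            constructor <;> linarith
          calc (v0 k - v) p.1 p.2 * B p.2 p.1 ≤ |(v0 k - v) p.1 p.2 * B p.2 p.1| :=
                le_abs_self _
            _ = |(v0 k - v) p.1 p.2| * |B p.2 p.1| := abs_mul _ _
            _ ≤ δ * |B p.2 p.1| := mul_le_mul_of_nonneg_right h3 (abs_nonneg _)
        linarith
      have h4 : δ * C = δ * C0 + (d : ℝ) * δ * B.trace := by rw [hCdef]; ring
      linarith
    set Sk : (Fin d → Fin d → ℤ) → Set (Matrix (Fin d) (Fin d) ℝ) := fun k =>
      {u | ¬ LoewnerLE (w k) (R * u * R)} with hSkdef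
    have hSkmeas : ∀ k, MeasurableSet (Sk k) := by
      intro k
      have he : Sk k = ((fun u => R * u * R - w k) ⁻¹' {M | M.PosSemidef})ᶜ := by
        ext u
        simp [hSkdef, LoewnerLE]
      rw [he]
      exact ((aux_measurable_conj R (w k)) aux_measurableSet_posSemidef).compl
    have hUSk : ∀ k ∈ K, μ (U ⁻¹' Sk k) ≤ ENNReal.ofReal ((w k * B).trace) := by
      intro k hk
      have hIpsd : (R⁻¹ * w k * R⁻¹).PosSemidef := by
        have hcj := (hwpsd k hk).mul_mul_conjTranspose_same R⁻¹
        rwa [hRherm.inv.eq] at hcj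
      have hset : U ⁻¹' Sk k = {ω | ¬ LoewnerLE (R⁻¹ * w k * R⁻¹) (U ω)} := by
        ext ω
        simp only [Set.mem_preimage, hSkdef, Set.mem_setOf_eq]
        exact not_congr (aux_loewner_conj hRherm hRdet (w k) (U ω))
      rw [hset]
      refine (hU _ hIpsd).trans (le_of_eq ?_)
      congr 1
      rw [Matrix.trace_mul_cycle, hRinvinv, Matrix.trace_mul_comm]
    set D : (Fin d → Fin d → ℤ) → Set Ω := fun k => G ∩ V ⁻¹' cell k with hDdef
    have hDm8 : ∀ k, MeasurableSet[⨆ n, (ℱ n : MeasurableSpace Ω)] (D k) := fun k =>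
      hGm8.inter (hVpre _ (hcellmeas k))
    have hDmeas : ∀ k, MeasurableSet (D k) := fun k => hm8le _ (hDm8 k)
    have hDdisj : Pairwise (Function.onFun Disjoint D) := by
      intro k k' hkk'
      rw [Function.onFun, Set.disjoint_left]
      intro ω hω hω'
      exact hkk' ((huniq (V ω) k hω.2).trans (huniq (V ω) k' hω'.2).symm)
    set F : (Fin d → Fin d → ℤ) → Set Ω := fun k =>
      if k ∈ K then U ⁻¹' Sk k ∩ D k else ∅ with hFdef
    have hcover : E ∩ G ⊆ ⋃ k, F k := by
      rintro ω ⟨hWE, hWG⟩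
      have hVpsd : (V ω).PosSemidef := Set.mem_iInter.mp hWG (τ ω)
      have hVcell : V ω ∈ cell (fun i j => ⌊V ω i j / δ⌋) := hmemcell (V ω)
      have hkK : (fun i j => ⌊V ω i j / δ⌋) ∈ K := ⟨V ω, hVcell, hVpsd⟩
      refine Set.mem_iUnion.mpr ⟨fun i j => ⌊V ω i j / δ⌋, ?_⟩
      have hFk : F (fun i j => ⌊V ω i j / δ⌋)
          = U ⁻¹' Sk (fun i j => ⌊V ω i j / δ⌋) ∩ D (fun i j => ⌊V ω i j / δ⌋) := by
        simp only [hFdef]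
        rw [if_pos hkK]
      rw [hFk]
      refine ⟨?_, hWG, hVcell⟩
      intro hL
      exact hWE (aux_loewner_mono (hdom _ hkK (V ω) hVcell (hVherm ω)) hL)
    have hfmeas : Measurable (fun ω => ENNReal.ofReal (Z (τ ω) ω + δ * C)) :=
      (hZtmeas.add_const _).ennreal_ofReal
    have hmaink : ∀ k, μ (F k) ≤ ∫⁻ ω in D k, ENNReal.ofReal (Z (τ ω) ω + δ * C) ∂μ := by
      intro k
      by_cases hk : k ∈ K
      · have hFk : F k = U ⁻¹' Sk k ∩ D k := by simp only [hFdef]; rw [if_pos hk]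
        rw [hFk]
        have hprod : μ (U ⁻¹' Sk k ∩ D k) = μ (U ⁻¹' Sk k) * μ (D k) :=
          (ProbabilityTheory.Indep_iff _ _ μ).mp hUindep (U ⁻¹' Sk k) (D k)
            (MeasurableSpace.measurableSet_comap.mpr ⟨Sk k, hSkmeas k, rfl⟩) (hDm8 k)
        rw [hprod]
        calc μ (U ⁻¹' Sk k) * μ (D k)
            ≤ ENNReal.ofReal ((w k * B).trace) * μ (D k) :=
              mul_le_mul_left (hUSk k hk) _
          _ = ∫⁻ _ in D k, ENNReal.ofReal ((w k * B).trace) ∂μ := by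
              rw [setLIntegral_const]
          _ ≤ ∫⁻ ω in D k, ENNReal.ofReal (Z (τ ω) ω + δ * C) ∂μ := by
              refine setLIntegral_mono hfmeas fun ω hω => ?_
              refine ENNReal.ofReal_le_ofReal ?_
              have hbd := htrwk k hk (V ω) hω.2
              have hZV : Z (τ ω) ω = (V ω * B).trace := rfl
              rw [hZV]
              linarith
      · have hFk : F k = ∅ := by simp only [hFdef]; rw [if_neg hk]
        rw [hFk]
        simp
    have h1 : μ E ≤ μ (E ∩ G) := by
      have hsplit : μ E ≤ μ (E ∩ G) + μ (E ∩ Gᶜ) := by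
        conv_lhs => rw [← Set.inter_union_compl E G]
        exact measure_union_le _ _
      have h2 : μ (E ∩ Gᶜ) = 0 := measure_mono_null Set.inter_subset_right hGc
      rwa [h2, add_zero] at hsplit
    have h3 : μ (E ∩ G) ≤ ∑' k, μ (F k) :=
      (measure_mono hcover).trans (measure_iUnion_le F)
    have h4 : ∑' k, μ (F k) ≤ ∫⁻ ω in ⋃ k, D k, ENNReal.ofReal (Z (τ ω) ω + δ * C) ∂μ := by
      rw [lintegral_iUnion hDmeas hDdisj]
      exact ENNReal.tsum_le_tsum hmaink
    have h5 : ∫⁻ ω in ⋃ k, D k, ENNReal.ofReal (Z (τ ω) ω + δ * C) ∂μ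
        ≤ ∫⁻ ω, ENNReal.ofReal (Z (τ ω) ω + δ * C) ∂μ := setLIntegral_le_lintegral _ _
    have h6 : ∫⁻ ω, ENNReal.ofReal (Z (τ ω) ω + δ * C) ∂μ
        ≤ ∫⁻ ω, ENNReal.ofReal (Z (τ ω) ω) ∂μ + ENNReal.ofReal (δ * C) := by
      calc ∫⁻ ω, ENNReal.ofReal (Z (τ ω) ω + δ * C) ∂μ
          ≤ ∫⁻ ω, (ENNReal.ofReal (Z (τ ω) ω) + ENNReal.ofReal (δ * C)) ∂μ :=
            lintegral_mono fun ω => ENNReal.ofReal_add_le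
        _ = ∫⁻ ω, ENNReal.ofReal (Z (τ ω) ω) ∂μ + ENNReal.ofReal (δ * C) := by
            rw [lintegral_add_right _ measurable_const, lintegral_const, measure_univ, mul_one]
    calc μ E ≤ μ (E ∩ G) := h1
      _ ≤ ∑' k, μ (F k) := h3
      _ ≤ ∫⁻ ω in ⋃ k, D k, ENNReal.ofReal (Z (τ ω) ω + δ * C) ∂μ := h4
      _ ≤ ∫⁻ ω, ENNReal.ofReal (Z (τ ω) ω + δ * C) ∂μ := h5
      _ ≤ ∫⁻ ω, ENNReal.ofReal (Z (τ ω) ω) ∂μ + ENNReal.ofReal (δ * C) := h6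
      _ ≤ ENNReal.ofReal (∫ ω, Z 0 ω ∂μ) + ENNReal.ofReal (δ * C) :=
          add_le_add_left hPartB _
  have hmuE : μ E ≤ ENNReal.ofReal (∫ ω, Z 0 ω ∂μ) := by
    refine ENNReal.le_of_forall_pos_le_add fun ε hε _ => ?_
    have hd0 : (0:ℝ) < (ε:ℝ) / (C + 1) := div_pos (by exact_mod_cast hε) (by linarith)
    refine (hstep _ hd0).trans (add_le_add_right ?_ _)
    have hle2 : (ε:ℝ) / (C + 1) * C ≤ (ε:ℝ) := by
      rw [div_mul_eq_mul_div, div_le_iff₀ (by linarith)]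
      nlinarith [ε.coe_nonneg, hCnn]
    calc ENNReal.ofReal ((ε:ℝ)/(C+1) * C) ≤ ENNReal.ofReal (ε:ℝ) :=
          ENNReal.ofReal_le_ofReal hle2
      _ = (ε : ENNReal) := ENNReal.ofReal_coe_nnreal
  rw [hTr] at hmuE
  exact hmuE

end
end
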